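/- arXiv:1304.5498 — 4 statements merged into one kernel-verified Lean document; each statement's English description precedes it below -/
import Mathlib

section
/- Let 1 ≤ k ≤ n. If a graph G with n vertices has a k-derivation, then G has a k-derivation of length at most n - k + 1. -/
/-- A template over a universe `V`: a pair of partitions of `V`
(components and groups). -/
structure Template (V : Type*) where
  cmp : Set (Set V)
  grps : Set (Set V)
  cmp_part : Setoid.IsPartition cmp
  grps_part : Setoid.IsPartition grps

/-- `P` refines `Q`: every block of `P` is contained in a block of `Q`. -/
def Refines {V : Type*} (P Q : Set (Set V)) : Prop :=
  ∀ B ∈ P, ∃ C ∈ Q, B ⊆ C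

/-- `u` and `v` lie in a common block of `P`. -/
def SameIn {V : Type*} (P : Set (Set V)) (u v : V) : Prop :=
  ∃ B ∈ P, u ∈ B ∧ v ∈ B

/-- Conditions D1–D4 of a derivation `(T 0, …, T t)`. -/
structure IsDerivation {V : Type*} [Fintype V] (t : ℕ)
    (T : Fin (t + 1) → Template V) : Prop where
  first : (T 0).cmp.ncard = Fintype.card V
  last : (T (Fin.last t)).cmp.ncard = 1
  grps_refine : ∀ i, Refines (T i).grps (T i).cmp
  cmp_mono : ∀ i : Fin t, Refines (T i.castSucc).cmp (T i.succ).cmp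
  grps_mono : ∀ i : Fin t, Refines (T i.castSucc).grps (T i.succ).grps

/-- Every component of `T` contains at most `k` groups. -/
def TemplateWidthLE {V : Type*} (T : Template V) (k : ℕ) : Prop :=
  ∀ C ∈ T.cmp, {g ∈ T.grps | g ⊆ C}.ncard ≤ k

/-- The number of components strictly decreases at every step. -/
def StrictDeriv {V : Type*} {t : ℕ} (T : Fin (t + 1) → Template V) : Prop :=
  ∀ i : Fin t, (T i.succ).cmp.ncard < (T i.castSucc).cmp.ncard

/-- A derivation of the graph `G`: D1–D4 together with the edge,
neighborhood, and path properties. -/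
structure IsDerivationOf {V : Type*} [Fintype V] (G : SimpleGraph V) (t : ℕ)
    (T : Fin (t + 1) → Template V) extends IsDerivation t T : Prop where
  edge : ∀ i : Fin t, ∀ u v : V, u ≠ v → G.Adj u v →
    SameIn (T i.succ).grps u v → SameIn (T i.castSucc).cmp u v
  nbhd : ∀ i : Fin t, ∀ u v w : V, u ≠ v → u ≠ w → v ≠ w →
    G.Adj u v → ¬ G.Adj u w →
    SameIn (T i.succ).grps v w → SameIn (T i.castSucc).cmp u v
  path : ∀ i : Fin t, ∀ u v w x : V,
    u ≠ v → u ≠ w → u ≠ x → v ≠ w → v ≠ x → w ≠ x →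
    G.Adj u v → G.Adj u w → G.Adj v x → ¬ G.Adj w x →
    SameIn (T i.succ).grps u x → SameIn (T i.succ).grps v w →
    SameIn (T i.castSucc).cmp u v

/-- A `k`-derivation of `G`: a derivation of `G` of width at most `k`. -/
def IsKDerivationOf {V : Type*} [Fintype V] (k : ℕ) (G : SimpleGraph V)
    (t : ℕ) (T : Fin (t + 1) → Template V) : Prop :=
  IsDerivationOf G t T ∧ ∀ i, TemplateWidthLE (T i) k

/-- Syntax of `k`-expressions over vertex set `V` with labels in `Fin k`. -/
inductive CWExpr (V : Type*) (k : ℕ) where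
  | single : V → Fin k → CWExpr V k
  | union : CWExpr V k → CWExpr V k → CWExpr V k
  | relabel : Fin k → Fin k → CWExpr V k → CWExpr V k
  | addEdges : Fin k → Fin k → CWExpr V k → CWExpr V k

namespace CWExpr

variable {V : Type*} {k : ℕ}

/-- The vertices occurring in a `k`-expression. -/
def verts : CWExpr V k → Set V
  | single v _ => {v}
  | union a b => a.verts ∪ b.verts
  | relabel _ _ a => a.verts
  | addEdges _ _ a => a.verts

open Classical in
/-- The label of each vertex in the `k`-graph built by the expression. -/
noncomputable def label : CWExpr V k → V → Fin k
  | single _ i => fun _ => i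
  | union a b => fun u => if u ∈ a.verts then a.label u else b.label u
  | relabel i j a => fun u => if a.label u = i then j else a.label u
  | addEdges _ _ a => a.label

/-- The edge relation of the `k`-graph built by the expression. -/
def edges : CWExpr V k → V → V → Prop
  | single _ _ => fun _ _ => False
  | union a b => fun u v => a.edges u v ∨ b.edges u v
  | relabel _ _ a => a.edges
  | addEdges i j a => fun u v => a.edges u v ∨
      (u ∈ a.verts ∧ v ∈ a.verts ∧ u ≠ v ∧
        ((a.label u = i ∧ a.label v = j) ∨ (a.label u = j ∧ a.label v = i)))

/-- Well-formedness: unions are disjoint and edge insertions use two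
distinct labels. -/
def wf : CWExpr V k → Prop
  | single _ _ => True
  | union a b => a.wf ∧ b.wf ∧ Disjoint a.verts b.verts
  | relabel _ _ a => a.wf
  | addEdges i j a => i ≠ j ∧ a.wf

/-- The expression `e` defines the graph `G`. -/
def Defines (e : CWExpr V k) (G : SimpleGraph V) : Prop :=
  e.wf ∧ e.verts = Set.univ ∧ ∀ u v, e.edges u v ↔ G.Adj u v

end CWExpr

/-- The clique-width of a graph: the least `k` admitting a `k`-expression. -/
noncomputable def CliqueWidth {V : Type*} (G : SimpleGraph V) : ℕ :=
  sInf {k | ∃ e : CWExpr V k, e.Defines G}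

section Helpers

variable {V : Type*}

lemma Refines.trans' {P Q R : Set (Set V)} (h1 : Refines P Q) (h2 : Refines Q R) :
    Refines P R := by
  intro B hB
  obtain ⟨C, hC, hBC⟩ := h1 B hB
  obtain ⟨D, hD, hCD⟩ := h2 C hC
  exact ⟨D, hD, hBC.trans hCD⟩

lemma refines_univ {P : Set (Set V)} : Refines P {Set.univ} :=
  fun B _ => ⟨Set.univ, rfl, Set.subset_univ B⟩

lemma univ_isPartition [Nonempty V] : Setoid.IsPartition ({Set.univ} : Set (Set V)) := by
  constructor
  · intro h
    rw [Set.mem_singleton_iff] at h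
    exact Set.univ_nonempty.ne_empty h.symm
  · intro a
    refine ⟨Set.univ, ⟨rfl, trivial⟩, ?_⟩
    rintro b ⟨hb, -⟩
    exact hb

lemma part_nonempty {P : Set (Set V)} (hP : Setoid.IsPartition P) {B : Set V}
    (hB : B ∈ P) : B.Nonempty := by
  rw [Set.nonempty_iff_ne_empty]
  rintro rfl
  exact hP.1 hB

lemma part_eq_of_mem {P : Set (Set V)} (hP : Setoid.IsPartition P) {B C : Set V} {x : V}
    (hB : B ∈ P) (hC : C ∈ P) (hxB : x ∈ B) (hxC : x ∈ C) : B = C := by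
  obtain ⟨b, _, hun⟩ := hP.2 x
  rw [hun B ⟨hB, hxB⟩, hun C ⟨hC, hxC⟩]

lemma partition_subset_eq {P Q : Set (Set V)} (hP : Setoid.IsPartition P)
    (hQ : Setoid.IsPartition Q) (hsub : P ⊆ Q) : P = Q := by
  refine subset_antisymm hsub (fun C hC => ?_)
  obtain ⟨x, hx⟩ := part_nonempty hQ hC
  obtain ⟨B, hBP, hxB⟩ := (hP.2 x).exists
  have : B = C := part_eq_of_mem hQ (hsub hBP) hC hxB hx
  exact this ▸ hBP

lemma partition_ncard_le [Fintype V] {P : Set (Set V)} (hP : Setoid.IsPartition P) :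
    P.ncard ≤ Fintype.card V := by
  rcases isEmpty_or_nonempty V with hV | hV
  · have : P = ∅ := by
      ext B
      simp only [Set.mem_empty_iff_false, iff_false]
      intro hB
      obtain ⟨x, -⟩ := part_nonempty hP hB
      exact hV.false x
    simp [this]
  · classical
    let f : Set V → V := fun B => if h : B.Nonempty then h.some else Classical.arbitrary V
    have hf : ∀ B ∈ P, f B ∈ B := by
      intro B hB
      have h := part_nonempty hP hB
      simp only [f, dif_pos h]
      exact h.some_mem
    have hinj : Set.InjOn f P := fun B1 h1 B2 h2 he =>
      part_eq_of_mem hP h1 h2 (hf B1 h1) (he ▸ hf B2 h2)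
    calc P.ncard ≤ (Set.univ : Set V).ncard :=
          Set.ncard_le_ncard_of_injOn f (fun B _ => Set.mem_univ _) hinj (Set.toFinite _)
      _ = Fintype.card V := by rw [Set.ncard_univ, Nat.card_eq_fintype_card]

lemma ncard_lt_of_refines [Fintype V] {P Q : Set (Set V)}
    (hP : Setoid.IsPartition P) (hQ : Setoid.IsPartition Q)
    (href : Refines P Q) (hne : P ≠ Q) : Q.ncard < P.ncard := by
  classical
  have hnsub : ¬ P ⊆ Q := fun hsub => hne (partition_subset_eq hP hQ hsub)
  obtain ⟨B0, hB0P, hB0Q⟩ := Set.not_subset.mp hnsub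
  obtain ⟨C0, hC0Q, hB0C0⟩ := href B0 hB0P
  have hB0ne : B0 ≠ C0 := fun h => hB0Q (h ▸ hC0Q)
  obtain ⟨x0, hx0C0, hx0B0⟩ := Set.exists_of_ssubset (ssubset_of_subset_of_ne hB0C0 hB0ne)
  obtain ⟨B', hB'P, hx0B'⟩ := (hP.2 x0).exists
  have hB'C0 : B' ⊆ C0 := by
    obtain ⟨C', hC'Q, hsub⟩ := href B' hB'P
    have : C' = C0 := part_eq_of_mem hQ hC'Q hC0Q (hsub hx0B') hx0C0
    exact this ▸ hsub
  have hB'B0 : B' ≠ B0 := fun h => hx0B0 (h ▸ hx0B')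
  have hVne : Nonempty V := ⟨x0⟩
  let g : Set V → Set V := fun C =>
    if h : C.Nonempty then ((hP.2 h.some).exists).choose else ∅
  have hg : ∀ C ∈ Q, g C ∈ P ∧ ∃ x, x ∈ g C ∧ x ∈ C := by
    intro C hC
    have hCne : C.Nonempty := part_nonempty hQ hC
    have hspec := ((hP.2 hCne.some).exists).choose_spec
    have hgC : g C = ((hP.2 hCne.some).exists).choose := by
      simp only [g, dif_pos hCne]
    rw [hgC]
    exact ⟨hspec.1, hCne.some, hspec.2, hCne.some_mem⟩
  have hinj : Set.InjOn g Q := by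
    intro C1 h1 C2 h2 heq
    obtain ⟨hgP1, x1, hx1g, hx1C⟩ := hg C1 h1
    obtain ⟨-, x2, hx2g, hx2C⟩ := hg C2 h2
    obtain ⟨D, hDQ, hgD⟩ := href _ hgP1
    have e1 : D = C1 := part_eq_of_mem hQ hDQ h1 (hgD hx1g) hx1C
    have e2 : D = C2 := part_eq_of_mem hQ hDQ h2 (hgD (heq ▸ hx2g)) hx2C
    rw [← e1, e2]
  set M : Set V := if g C0 = B0 then B' else B0 with hM
  have hMP : M ∈ P := by
    rw [hM]; split <;> assumption
  have hMC0 : M ⊆ C0 := by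
    rw [hM]; split
    exacts [hB'C0, hB0C0]
  have hmaps : ∀ C ∈ Q, g C ∈ P \ {M} := by
    intro C hC
    obtain ⟨hgP, x, hxg, hxC⟩ := hg C hC
    refine ⟨hgP, ?_⟩
    simp only [Set.mem_singleton_iff]
    by_cases hCC0 : C = C0
    · subst hCC0
      rw [hM]
      split
      · rename_i hgb
        rw [hgb]
        exact fun h => hB'B0 h.symm
      · rename_i hgb
        exact hgb
    · intro hgM
      have hx0 : x ∈ C0 := hMC0 (hgM ▸ hxg)
      exact hCC0 (part_eq_of_mem hQ hC hC0Q hxC hx0)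
  have h1 : Q.ncard ≤ (P \ {M}).ncard :=
    Set.ncard_le_ncard_of_injOn g hmaps hinj (Set.toFinite _)
  have h2 : (P \ {M}).ncard < P.ncard :=
    Set.ncard_diff_singleton_lt_of_mem hMP (Set.toFinite P)
  omega

end Helpers

section Main

variable {V : Type*}

/-- ℕ-indexed reformulation of a `k`-derivation of length `t`. -/
structure NDeriv [Fintype V] (G : SimpleGraph V) (k t : ℕ) (U : ℕ → Template V) : Prop where
  first : (U 0).cmp.ncard = Fintype.card V
  last : (U t).cmp.ncard = 1
  grps_refine : ∀ i ≤ t, Refines (U i).grps (U i).cmp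
  cmp_mono : ∀ i < t, Refines (U i).cmp (U (i+1)).cmp
  grps_mono : ∀ i < t, Refines (U i).grps (U (i+1)).grps
  edge : ∀ i < t, ∀ u v : V, u ≠ v → G.Adj u v →
    SameIn (U (i+1)).grps u v → SameIn (U i).cmp u v
  nbhd : ∀ i < t, ∀ u v w : V, u ≠ v → u ≠ w → v ≠ w → G.Adj u v → ¬ G.Adj u w →
    SameIn (U (i+1)).grps v w → SameIn (U i).cmp u v
  path : ∀ i < t, ∀ u v w x : V, u ≠ v → u ≠ w → u ≠ x → v ≠ w → v ≠ x → w ≠ x →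
    G.Adj u v → G.Adj u w → G.Adj v x → ¬ G.Adj w x →
    SameIn (U (i+1)).grps u x → SameIn (U (i+1)).grps v w → SameIn (U i).cmp u v
  width : ∀ i ≤ t, TemplateWidthLE (U i) k

lemma toNDeriv [Fintype V] {G : SimpleGraph V} {k t : ℕ} {T : Fin (t+1) → Template V}
    (h : IsKDerivationOf k G t T) : ∃ U : ℕ → Template V, NDeriv G k t U := by
  classical
  obtain ⟨hD, hW⟩ := h
  refine ⟨fun i => if hi : i < t + 1 then T ⟨i, hi⟩ else T 0, ?_⟩
  have hU : ∀ i (hi : i ≤ t),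
      (if h' : i < t + 1 then T ⟨i, h'⟩ else T 0) = T ⟨i, by omega⟩ := by
    intro i hi
    rw [dif_pos (show i < t + 1 by omega)]
  constructor
  · rw [hU 0 (by omega)]
    have e : (⟨0, by omega⟩ : Fin (t+1)) = 0 := by apply Fin.ext; simp
    rw [e]; exact hD.first
  · rw [hU t (by omega)]
    have e : (⟨t, by omega⟩ : Fin (t+1)) = Fin.last t := by apply Fin.ext; simp
    rw [e]; exact hD.last
  · intro i hi
    rw [hU i hi]; exact hD.grps_refine _
  · intro i hi
    rw [hU i (by omega), hU (i+1) (by omega)]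
    have e1 : (⟨i, by omega⟩ : Fin (t+1)) = (⟨i, hi⟩ : Fin t).castSucc := by
      apply Fin.ext; simp
    have e2 : (⟨i+1, by omega⟩ : Fin (t+1)) = (⟨i, hi⟩ : Fin t).succ := by
      apply Fin.ext; simp
    rw [e1, e2]; exact hD.cmp_mono _
  · intro i hi
    rw [hU i (by omega), hU (i+1) (by omega)]
    have e1 : (⟨i, by omega⟩ : Fin (t+1)) = (⟨i, hi⟩ : Fin t).castSucc := by
      apply Fin.ext; simp
    have e2 : (⟨i+1, by omega⟩ : Fin (t+1)) = (⟨i, hi⟩ : Fin t).succ := by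
      apply Fin.ext; simp
    rw [e1, e2]; exact hD.grps_mono _
  · intro i hi u v h1 h2 hs
    rw [hU (i+1) (by omega)] at hs
    rw [hU i (by omega)]
    have e1 : (⟨i, by omega⟩ : Fin (t+1)) = (⟨i, hi⟩ : Fin t).castSucc := by
      apply Fin.ext; simp
    have e2 : (⟨i+1, by omega⟩ : Fin (t+1)) = (⟨i, hi⟩ : Fin t).succ := by
      apply Fin.ext; simp
    rw [e2] at hs; rw [e1]
    exact hD.edge _ u v h1 h2 hs
  · intro i hi u v w h1 h2 h3 h4 h5 hs
    rw [hU (i+1) (by omega)] at hs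
    rw [hU i (by omega)]
    have e1 : (⟨i, by omega⟩ : Fin (t+1)) = (⟨i, hi⟩ : Fin t).castSucc := by
      apply Fin.ext; simp
    have e2 : (⟨i+1, by omega⟩ : Fin (t+1)) = (⟨i, hi⟩ : Fin t).succ := by
      apply Fin.ext; simp
    rw [e2] at hs; rw [e1]
    exact hD.nbhd _ u v w h1 h2 h3 h4 h5 hs
  · intro i hi u v w x h1 h2 h3 h4 h5 h6 h7 h8 h9 h10 hs1 hs2
    rw [hU (i+1) (by omega)] at hs1 hs2
    rw [hU i (by omega)]
    have e1 : (⟨i, by omega⟩ : Fin (t+1)) = (⟨i, hi⟩ : Fin t).castSucc := by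
      apply Fin.ext; simp
    have e2 : (⟨i+1, by omega⟩ : Fin (t+1)) = (⟨i, hi⟩ : Fin t).succ := by
      apply Fin.ext; simp
    rw [e2] at hs1 hs2; rw [e1]
    exact hD.path _ u v w x h1 h2 h3 h4 h5 h6 h7 h8 h9 h10 hs1 hs2
  · intro i hi
    rw [hU i hi]; exact hW _

lemma ofNDeriv [Fintype V] {G : SimpleGraph V} {k t : ℕ} {U : ℕ → Template V}
    (h : NDeriv G k t U) : IsKDerivationOf k G t (fun j : Fin (t+1) => U j) := by
  have hlt : ∀ i : Fin t, ((i.castSucc : Fin (t+1)) : ℕ) = (i : ℕ) := fun i => Fin.coe_castSucc i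
  have hsc : ∀ i : Fin t, ((i.succ : Fin (t+1)) : ℕ) = (i : ℕ) + 1 := fun i => Fin.val_succ i
  refine ⟨⟨⟨?_, ?_, ?_, ?_, ?_⟩, ?_, ?_, ?_⟩, ?_⟩
  · show (U ((0 : Fin (t+1)) : ℕ)).cmp.ncard = _
    rw [Fin.val_zero]; exact h.first
  · show (U ((Fin.last t : Fin (t+1)) : ℕ)).cmp.ncard = _
    rw [Fin.val_last]; exact h.last
  · intro i
    exact h.grps_refine (i : ℕ) (Nat.lt_succ_iff.mp i.isLt)
  · intro i
    show Refines (U (i.castSucc : ℕ)).cmp (U (i.succ : ℕ)).cmp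
    rw [hlt, hsc]
    exact h.cmp_mono i i.isLt
  · intro i
    show Refines (U (i.castSucc : ℕ)).grps (U (i.succ : ℕ)).grps
    rw [hlt, hsc]
    exact h.grps_mono i i.isLt
  · intro i u v h1 h2 hs
    show SameIn (U (i.castSucc : ℕ)).cmp u v
    rw [hlt]
    refine h.edge i i.isLt u v h1 h2 ?_
    rw [← hsc]; exact hs
  · intro i u v w h1 h2 h3 h4 h5 hs
    show SameIn (U (i.castSucc : ℕ)).cmp u v
    rw [hlt]
    refine h.nbhd i i.isLt u v w h1 h2 h3 h4 h5 ?_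
    rw [← hsc]; exact hs
  · intro i u v w x h1 h2 h3 h4 h5 h6 h7 h8 h9 h10 hs1 hs2
    show SameIn (U (i.castSucc : ℕ)).cmp u v
    rw [hlt]
    refine h.path i i.isLt u v w x h1 h2 h3 h4 h5 h6 h7 h8 h9 h10 ?_ ?_ <;>
      rw [← hsc]
    exacts [hs1, hs2]
  · intro i
    exact h.width (i : ℕ) (Nat.lt_succ_iff.mp i.isLt)

end Main

lemma shorten {V : Type*} [Fintype V] (G : SimpleGraph V) (k : ℕ) (hk : 1 ≤ k)
    (hkn : k ≤ Fintype.card V) :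
    ∀ t, ∀ U : ℕ → Template V, NDeriv G k t U →
      ∃ t' U', t' ≤ Fintype.card V - k + 1 ∧ NDeriv G k t' U' := by
  intro t
  induction t using Nat.strong_induction_on with
  | _ t IH =>
  intro U D
  by_cases ht : t ≤ Fintype.card V - k + 1
  · exact ⟨t, U, ht, D⟩
  push_neg at ht
  have hVne : Nonempty V := Fintype.card_pos_iff.mp (by omega)
  by_cases hdel : ∃ m, 1 ≤ m ∧ m ≤ t - 1 ∧ (U m).grps = (U (m+1)).grps
  · -- delete index m : recurse on length t - 1
    obtain ⟨m, hm1, hm2, heq⟩ := hdel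
    have ht2 : 2 ≤ t := by omega
    set U' : ℕ → Template V := fun i => if i < m then U i else U (i+1) with hU'
    have hU'lt : ∀ i, i < m → U' i = U i := fun i h => if_pos h
    have hU'ge : ∀ i, m ≤ i → U' i = U (i+1) := fun i h => if_neg (by omega)
    refine IH (t-1) (by omega) U' ?_
    constructor
    · rw [hU'lt 0 (by omega)]; exact D.first
    · rw [hU'ge (t-1) (by omega), show t - 1 + 1 = t by omega]; exact D.last
    · intro i hi
      by_cases h : i < m
      · rw [hU'lt i h]; exact D.grps_refine i (by omega)
      · rw [hU'ge i (by omega)]; exact D.grps_refine (i+1) (by omega)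
    · intro i hi
      rcases lt_trichotomy (i+1) m with h | h | h
      · rw [hU'lt i (by omega), hU'lt (i+1) h]; exact D.cmp_mono i (by omega)
      · rw [hU'lt i (by omega), hU'ge (i+1) (by omega)]
        exact (D.cmp_mono i (by omega)).trans' (D.cmp_mono (i+1) (by omega))
      · rw [hU'ge i (by omega), hU'ge (i+1) (by omega)]
        exact D.cmp_mono (i+1) (by omega)
    · intro i hi
      rcases lt_trichotomy (i+1) m with h | h | h
      · rw [hU'lt i (by omega), hU'lt (i+1) h]; exact D.grps_mono i (by omega)
      · rw [hU'lt i (by omega), hU'ge (i+1) (by omega)]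
        exact (D.grps_mono i (by omega)).trans' (D.grps_mono (i+1) (by omega))
      · rw [hU'ge i (by omega), hU'ge (i+1) (by omega)]
        exact D.grps_mono (i+1) (by omega)
    · intro i hi u v h1 h2 hs
      rcases lt_trichotomy (i+1) m with h | h | h
      · rw [hU'lt (i+1) h] at hs; rw [hU'lt i (by omega)]
        exact D.edge i (by omega) u v h1 h2 hs
      · rw [hU'ge (i+1) (by omega), show i+1+1 = m+1 by omega, ← heq,
          show m = i + 1 from h.symm] at hs
        rw [hU'lt i (by omega)]
        exact D.edge i (by omega) u v h1 h2 hs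
      · rw [hU'ge (i+1) (by omega)] at hs; rw [hU'ge i (by omega)]
        exact D.edge (i+1) (by omega) u v h1 h2 hs
    · intro i hi u v w h1 h2 h3 h4 h5 hs
      rcases lt_trichotomy (i+1) m with h | h | h
      · rw [hU'lt (i+1) h] at hs; rw [hU'lt i (by omega)]
        exact D.nbhd i (by omega) u v w h1 h2 h3 h4 h5 hs
      · rw [hU'ge (i+1) (by omega), show i+1+1 = m+1 by omega, ← heq,
          show m = i + 1 from h.symm] at hs
        rw [hU'lt i (by omega)]
        exact D.nbhd i (by omega) u v w h1 h2 h3 h4 h5 hs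
      · rw [hU'ge (i+1) (by omega)] at hs; rw [hU'ge i (by omega)]
        exact D.nbhd (i+1) (by omega) u v w h1 h2 h3 h4 h5 hs
    · intro i hi u v w x h1 h2 h3 h4 h5 h6 h7 h8 h9 h10 hs1 hs2
      rcases lt_trichotomy (i+1) m with h | h | h
      · rw [hU'lt (i+1) h] at hs1 hs2; rw [hU'lt i (by omega)]
        exact D.path i (by omega) u v w x h1 h2 h3 h4 h5 h6 h7 h8 h9 h10 hs1 hs2
      · rw [hU'ge (i+1) (by omega), show i+1+1 = m+1 by omega, ← heq,
          show m = i + 1 from h.symm] at hs1 hs2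
        rw [hU'lt i (by omega)]
        exact D.path i (by omega) u v w x h1 h2 h3 h4 h5 h6 h7 h8 h9 h10 hs1 hs2
      · rw [hU'ge (i+1) (by omega)] at hs1 hs2; rw [hU'ge i (by omega)]
        exact D.path (i+1) (by omega) u v w x h1 h2 h3 h4 h5 h6 h7 h8 h9 h10 hs1 hs2
    · intro i hi
      by_cases h : i < m
      · rw [hU'lt i h]; exact D.width i (by omega)
      · rw [hU'ge i (by omega)]; exact D.width (i+1) (by omega)
  · -- no deletable index: group counts strictly decrease, jump to the end
    push_neg at hdel
    have hstep : ∀ m, 1 ≤ m → m ≤ t - 1 → (U (m+1)).grps.ncard < (U m).grps.ncard := by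
      intro m h1 h2
      exact ncard_lt_of_refines (U m).grps_part (U (m+1)).grps_part
        (D.grps_mono m (by omega)) (hdel m h1 h2)
    have hbound : ∀ r, 1 ≤ r → r ≤ t → (U r).grps.ncard + r ≤ Fintype.card V + 1 := by
      intro r
      induction r with
      | zero => intro h1; exact absurd h1 (by omega)
      | succ r ih =>
        intro _ h2
        by_cases hr : r = 0
        · subst hr
          have := partition_ncard_le (U (0+1)).grps_part
          omega
        · have h1' : 1 ≤ r := by omega
          have hb := ih h1' (by omega)
          have hs := hstep r h1' (by omega)
          omega
    set r : ℕ := Fintype.card V - k + 1 with hr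
    have hr1 : 1 ≤ r := by omega
    have hrt : r ≤ t - 1 := by omega
    have hgr : (U r).grps.ncard ≤ k := by
      have := hbound r hr1 (by omega)
      omega
    set Tstar : Template V :=
      ⟨{Set.univ}, (U r).grps, univ_isPartition, (U r).grps_part⟩ with hTstar
    set U2 : ℕ → Template V := fun i => if i < r then U i else Tstar with hU2
    have hU'lt : ∀ i, i < r → U2 i = U i := fun i h => if_pos h
    have hU'ge : ∀ i, r ≤ i → U2 i = Tstar := fun i h => if_neg (by omega)
    refine ⟨r, U2, le_refl r, ?_⟩
    constructor
    · rw [hU'lt 0 (by omega)]; exact D.first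
    · rw [hU'ge r (le_refl r)]
      show ({Set.univ} : Set (Set V)).ncard = 1
      exact Set.ncard_singleton _
    · intro i hi
      by_cases h : i < r
      · rw [hU'lt i h]; exact D.grps_refine i (by omega)
      · rw [hU'ge i (by omega)]
        exact refines_univ
    · intro i hi
      by_cases h : i + 1 < r
      · rw [hU'lt i (by omega), hU'lt (i+1) h]; exact D.cmp_mono i (by omega)
      · rw [hU'lt i (by omega), hU'ge (i+1) (by omega)]
        exact refines_univ
    · intro i hi
      by_cases h : i + 1 < r
      · rw [hU'lt i (by omega), hU'lt (i+1) h]; exact D.grps_mono i (by omega)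
      · rw [hU'lt i (by omega), hU'ge (i+1) (by omega)]
        show Refines (U i).grps (U r).grps
        rw [show r = i + 1 by omega]
        exact D.grps_mono i (by omega)
    · intro i hi u v h1 h2 hs
      by_cases h : i + 1 < r
      · rw [hU'lt (i+1) h] at hs; rw [hU'lt i (by omega)]
        exact D.edge i (by omega) u v h1 h2 hs
      · rw [hU'ge (i+1) (by omega)] at hs
        rw [hU'lt i (by omega)]
        refine D.edge i (by omega) u v h1 h2 ?_
        rw [show i + 1 = r by omega]
        exact hs
    · intro i hi u v w h1 h2 h3 h4 h5 hs
      by_cases h : i + 1 < r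
      · rw [hU'lt (i+1) h] at hs; rw [hU'lt i (by omega)]
        exact D.nbhd i (by omega) u v w h1 h2 h3 h4 h5 hs
      · rw [hU'ge (i+1) (by omega)] at hs
        rw [hU'lt i (by omega)]
        refine D.nbhd i (by omega) u v w h1 h2 h3 h4 h5 ?_
        rw [show i + 1 = r by omega]
        exact hs
    · intro i hi u v w x h1 h2 h3 h4 h5 h6 h7 h8 h9 h10 hs1 hs2
      by_cases h : i + 1 < r
      · rw [hU'lt (i+1) h] at hs1 hs2; rw [hU'lt i (by omega)]
        exact D.path i (by omega) u v w x h1 h2 h3 h4 h5 h6 h7 h8 h9 h10 hs1 hs2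
      · rw [hU'ge (i+1) (by omega)] at hs1 hs2
        rw [hU'lt i (by omega)]
        refine D.path i (by omega) u v w x h1 h2 h3 h4 h5 h6 h7 h8 h9 h10 ?_ ?_ <;>
          rw [show i + 1 = r by omega]
        exacts [hs1, hs2]
    · intro i hi
      by_cases h : i < r
      · rw [hU'lt i h]; exact D.width i (by omega)
      · rw [hU'ge i (by omega)]
        intro C hC
        rw [Set.mem_singleton_iff] at hC
        subst hC
        have he : {g ∈ (U r).grps | g ⊆ Set.univ} = (U r).grps := by
          ext g; simp
        show {g ∈ (U r).grps | g ⊆ Set.univ}.ncard ≤ k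
        rw [he]
        exact hgr


/-- If `1 ≤ k ≤ n` and a graph with `n` vertices has a
`k`-derivation, then it has a `k`-derivation of length at most `n - k + 1`. -/
theorem exists_short_kDerivation {V : Type*} [Fintype V] (G : SimpleGraph V)
    (k : ℕ) (hk : 1 ≤ k) (hkn : k ≤ Fintype.card V)
    (h : ∃ (t : ℕ) (T : Fin (t + 1) → Template V), IsKDerivationOf k G t T) :
    ∃ (t : ℕ) (T : Fin (t + 1) → Template V),
      t ≤ Fintype.card V - k + 1 ∧ IsKDerivationOf k G t T := by
  obtain ⟨t, T, hT⟩ := h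
  obtain ⟨U, hU⟩ := toNDeriv hT
  obtain ⟨t', U', ht', D'⟩ := shorten G k hk hkn t U hU
  exact ⟨t', fun j : Fin (t'+1) => U' j, ht', ofNDeriv D'⟩
end

section
/- Fix k ≥ 1 and n ≥ 1. Every strict derivation over a universe of size n has k-length at most n - k, where the k-length is the number of templates containing a component of size greater than k. -/
open Classical in
/-- The `k`-length of a derivation: the number of templates containing a
component of size greater than `k`. -/
noncomputable def kLength {V : Type*} {t : ℕ} (k : ℕ)
    (T : Fin (t + 1) → Template V) : ℕ :=
  (Finset.univ.filter (fun i : Fin (t + 1) => ∃ C ∈ (T i).cmp, k < C.ncard)).card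

lemma part_ncard_le {V : Type*} [Fintype V] {P : Set (Set V)} (hP : Setoid.IsPartition P)
    {C : Set V} (hC : C ∈ P) {k : ℕ} (hk : k < C.ncard) :
    P.ncard ≤ Fintype.card V - k := by
  classical
  obtain ⟨c, hc⟩ : C.Nonempty := Setoid.nonempty_of_mem_partition hP hC
  set f : Set V → V := fun B => if h : B.Nonempty then h.choose else c with hfdef
  have hfB : ∀ B ∈ P \ {C}, f B ∈ B := by
    intro B hB
    have hBne : B.Nonempty := Setoid.nonempty_of_mem_partition hP hB.1
    simpa [hfdef, dif_pos hBne] using hBne.choose_spec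
  have hmem : ∀ B ∈ P \ {C}, f B ∈ Cᶜ := by
    intro B hB
    have hdisj := hP.pairwiseDisjoint hB.1 hC (by simpa using hB.2)
    exact fun hmemC => Set.disjoint_left.mp hdisj (hfB B hB) hmemC
  have hinj : Set.InjOn f (P \ {C}) := by
    intro B1 h1 B2 h2 he
    by_contra hne
    have hd := hP.pairwiseDisjoint h1.1 h2.1 hne
    exact Set.disjoint_left.mp hd (hfB B1 h1) (he ▸ hfB B2 h2)
  have h1 : (P \ {C}).ncard ≤ (Cᶜ).ncard :=
    Set.ncard_le_ncard_of_injOn f hmem hinj (Set.toFinite _)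
  have h2 : C.ncard + (Cᶜ : Set V).ncard = Fintype.card V := by
    rw [Set.ncard_add_ncard_compl, Nat.card_eq_fintype_card]
  have h3 : P.ncard = (P \ {C}).ncard + 1 := by
    rw [Set.ncard_diff_singleton_add_one hC (Set.toFinite P)]
  omega

/-- Every strict derivation over a universe of size `n ≥ 1` has
`k`-length at most `n - k` (for `k ≥ 1`). -/
theorem kLength_le {V : Type*} [Fintype V] (k t : ℕ) (hk : 1 ≤ k)
    (hn : 1 ≤ Fintype.card V) (T : Fin (t + 1) → Template V)
    (h : IsDerivation t T) (hs : StrictDeriv T) :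
    kLength k T ≤ Fintype.card V - k := by
  classical
  have hanti : StrictAnti (fun i => (T i).cmp.ncard) :=
    Fin.strictAnti_iff_succ_lt.mpr hs
  have hIcc : (Finset.Icc 1 (Fintype.card V - k)).card = Fintype.card V - k := by
    rw [Nat.card_Icc]; omega
  unfold kLength
  rw [Finset.filter_congr_decidable, ← hIcc]
  apply Finset.card_le_card_of_injOn (fun i => (T i).cmp.ncard)
  · intro i hi
    obtain ⟨C, hC, hCk⟩ := (Finset.mem_filter.mp hi).2
    have hub := part_ncard_le (T i).cmp_part hC hCk
    have h1 : 1 ≤ (T i).cmp.ncard := by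
      have : ({C} : Set (Set V)).ncard ≤ (T i).cmp.ncard :=
        Set.ncard_le_ncard (Set.singleton_subset_iff.mpr hC) (Set.toFinite _)
      simpa using this
    exact Finset.mem_Icc.mpr ⟨h1, hub⟩
  · exact fun a _ b _ hab => hanti.injective hab
end

section
/- From a k-derivation of a graph G one can obtain a k-expression of G; that is, if G has a k-derivation, then the clique-width of G is at most k. -/
section Aux

open CWExpr

variable {V : Type*} {k : ℕ}

lemma sameIn_symm {P : Set (Set V)} {u v : V} (h : SameIn P u v) : SameIn P v u := by
  obtain ⟨B, h1, h2, h3⟩ := h; exact ⟨B, h1, h3, h2⟩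

lemma blocks_eq {P : Set (Set V)} (hP : Setoid.IsPartition P) {B B' : Set V}
    (hB : B ∈ P) (hB' : B' ∈ P) {v : V} (h1 : v ∈ B) (h2 : v ∈ B') : B = B' :=
  ExistsUnique.unique (hP.2 v) ⟨hB, h1⟩ ⟨hB', h2⟩

/-- The invariant: `e` is a well-formed expression building exactly `G[C]`
with labels given by `ℓ` on `C`. -/
def Good (G : SimpleGraph V) (e : CWExpr V k) (C : Set V) (ℓ : V → Fin k) : Prop :=
  e.wf ∧ e.verts = C ∧ (∀ u v, e.edges u v ↔ G.Adj u v ∧ u ∈ C ∧ v ∈ C) ∧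
    ∀ v ∈ C, e.label v = ℓ v

lemma good_congr {G : SimpleGraph V} {e : CWExpr V k} {C : Set V} {ℓ ℓ' : V → Fin k}
    (h : Good G e C ℓ) (hl : ∀ v ∈ C, ℓ v = ℓ' v) : Good G e C ℓ' :=
  ⟨h.1, h.2.1, h.2.2.1, fun v hv => (h.2.2.2 v hv).trans (hl v hv)⟩

lemma good_relabel {G : SimpleGraph V} {e : CWExpr V k} {C : Set V} {ℓ : V → Fin k}
    (a b : Fin k) (h : Good G e C ℓ) :
    Good G (CWExpr.relabel a b e) C (fun v => if ℓ v = a then b else ℓ v) := by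
  obtain ⟨hwf, hv, he, hl⟩ := h
  refine ⟨hwf, hv, he, ?_⟩
  intro v hvC
  simp [CWExpr.label, hl v hvC]

/-- Apply a chain of relabellings to a label. -/
def chainApply (ps : List (Fin k × Fin k)) (x : Fin k) : Fin k :=
  ps.foldr (fun p y => if y = p.1 then p.2 else y) x

lemma good_chain {G : SimpleGraph V} {e : CWExpr V k} {C : Set V} {ℓ : V → Fin k}
    (ps : List (Fin k × Fin k)) (h : Good G e C ℓ) :
    Good G (ps.foldr (fun p e => CWExpr.relabel p.1 p.2 e) e) C
      (fun v => chainApply ps (ℓ v)) := by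
  induction ps with
  | nil => simpa [chainApply]
  | cons p ps ih =>
      exact good_congr (good_relabel p.1 p.2 ih) (by intro v hv; simp [chainApply]; split_ifs with hc <;> simp [hc])

lemma chainApply_of_not_src (ps : List (Fin k × Fin k)) (x : Fin k)
    (hx : ∀ p ∈ ps, x ≠ p.1) : chainApply ps x = x := by
  induction ps with
  | nil => rfl
  | cons p ps ih =>
      have h1 : chainApply ps x = x := ih (fun q hq => hx q (List.mem_cons_of_mem _ hq))
      simp [chainApply] at h1 ⊢
      rw [h1]
      simp [hx p (List.mem_cons_self)]

lemma chainApply_mem (ps : List (Fin k × Fin k)) (a b : Fin k)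
    (hmem : (a, b) ∈ ps) (hnd : (ps.map Prod.fst).Nodup)
    (ht : ∀ p ∈ ps, ∀ q ∈ ps, p.2 ≠ q.1) : chainApply ps a = b := by
  induction ps with
  | nil => simp at hmem
  | cons p ps ih =>
      rcases List.mem_cons.1 hmem with h | h
      · subst h
        have hx : ∀ q ∈ ps, a ≠ q.1 := by
          intro q hq hEq
          apply (List.nodup_cons.1 hnd).1
          rw [hEq]
          exact List.mem_map.2 ⟨q, hq, rfl⟩
        have h1 : chainApply ps a = a := chainApply_of_not_src ps a hx
        simp [chainApply] at h1 ⊢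
        rw [h1]; simp
      · have h1 : chainApply ps a = b :=
          ih h (List.nodup_cons.1 hnd).2
            (fun p1 hp1 q hq => ht p1 (List.mem_cons_of_mem _ hp1) q (List.mem_cons_of_mem _ hq))
        have hbp : b ≠ p.1 := ht (a, b) (List.mem_cons_of_mem _ h) p (List.mem_cons_self)
        simp [chainApply] at h1 ⊢
        rw [h1]; simp [hbp]

/-- Fold that adds all label-pair edges from a list. -/
def addAll (ps : List (Fin k × Fin k)) (e : CWExpr V k) : CWExpr V k :=
  ps.foldr (fun p e => CWExpr.addEdges p.1 p.2 e) e

@[simp] lemma addAll_verts (ps : List (Fin k × Fin k)) (e : CWExpr V k) :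
    (addAll ps e).verts = e.verts := by
  induction ps with
  | nil => rfl
  | cons p ps ih => simp [addAll, CWExpr.verts] at ih ⊢; exact ih

@[simp] lemma addAll_label (ps : List (Fin k × Fin k)) (e : CWExpr V k) :
    (addAll ps e).label = e.label := by
  induction ps with
  | nil => rfl
  | cons p ps ih => simp [addAll, CWExpr.label] at ih ⊢; exact ih

lemma addAll_wf (ps : List (Fin k × Fin k)) (e : CWExpr V k)
    (hp : ∀ p ∈ ps, p.1 ≠ p.2) (h : e.wf) : (addAll ps e).wf := by
  induction ps with
  | nil => exact h
  | cons p ps ih =>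
      exact ⟨hp p (List.mem_cons_self),
        ih (fun q hq => hp q (List.mem_cons_of_mem _ hq))⟩

lemma addAll_edges (ps : List (Fin k × Fin k)) (e : CWExpr V k) (u v : V) :
    (addAll ps e).edges u v ↔ e.edges u v ∨ ∃ p ∈ ps,
      u ∈ e.verts ∧ v ∈ e.verts ∧ u ≠ v ∧
        ((e.label u = p.1 ∧ e.label v = p.2) ∨ (e.label u = p.2 ∧ e.label v = p.1)) := by
  induction ps with
  | nil => simp [addAll]
  | cons p ps ih =>
      have hv := addAll_verts ps e
      have hl := addAll_label ps e
      show (addAll ps e).edges u v ∨ (u ∈ (addAll ps e).verts ∧ v ∈ (addAll ps e).verts ∧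
        u ≠ v ∧ (((addAll ps e).label u = p.1 ∧ (addAll ps e).label v = p.2) ∨
          ((addAll ps e).label u = p.2 ∧ (addAll ps e).label v = p.1))) ↔ _
      rw [ih, hv, hl]
      constructor
      · rintro (h | h) 
        · rcases h with h | ⟨q, hq, h⟩
          · exact Or.inl h
          · exact Or.inr ⟨q, List.mem_cons_of_mem _ hq, h⟩
        · exact Or.inr ⟨p, List.mem_cons_self, h⟩
      · rintro (h | ⟨q, hq, h⟩)
        · exact Or.inl (Or.inl h)
        · rcases List.mem_cons.1 hq with rfl | hq
          · exact Or.inr h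
          · exact Or.inl (Or.inr ⟨q, hq, h⟩)

end Aux


section Main

variable {V : Type*} [Fintype V] {G : SimpleGraph V} {k t : ℕ} {T : Fin (t + 1) → Template V}

/-- The key combinatorial lemma: a single edge between two groups crossing two
distinct old components forces the two groups to be completely joined. -/
lemma cross_complete (h : IsDerivationOf G t T) (i : Fin t) {u0 v0 x w : V}
    (hadj : G.Adj u0 v0) (hcmp : ¬ SameIn (T i.castSucc).cmp u0 v0)
    (hx : SameIn (T i.succ).grps u0 x) (hw : SameIn (T i.succ).grps v0 w)
    (hxw : x ≠ w) : G.Adj x w := by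
  have hne0 : u0 ≠ v0 := hadj.ne
  have hgrp_ne : ¬ SameIn (T i.succ).grps u0 v0 := fun hs => hcmp (h.edge i u0 v0 hne0 hadj hs)
  have step1 : ∀ x', SameIn (T i.succ).grps u0 x' → G.Adj v0 x' := by
    intro x' hx'
    have hxne : x' ≠ v0 := by rintro rfl; exact hgrp_ne hx'
    by_cases hxu : x' = u0
    · subst hxu; exact hadj.symm
    · by_contra hno
      exact hcmp (sameIn_symm (h.nbhd i v0 u0 x' (Ne.symm hne0) (Ne.symm hxne)
        (fun hh => hxu hh.symm) hadj.symm hno hx'))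
  have step2 : ∀ w', SameIn (T i.succ).grps v0 w' → G.Adj u0 w' := by
    intro w' hw'
    have hwne : w' ≠ u0 := by rintro rfl; exact hgrp_ne (sameIn_symm hw')
    by_cases hwv : w' = v0
    · subst hwv; exact hadj
    · by_contra hno
      exact hcmp (h.nbhd i u0 v0 w' hne0 (Ne.symm hwne) (fun hh => hwv hh.symm) hadj hno hw')
  by_cases hxu : x = u0
  · subst hxu; exact step2 w hw
  by_cases hwv : w = v0
  · subst hwv; exact (step1 x hx).symm
  by_contra hno
  have hd1 : u0 ≠ w := by rintro rfl; exact hgrp_ne (sameIn_symm hw)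
  have hd2 : v0 ≠ x := by rintro rfl; exact hgrp_ne hx
  exact hcmp (h.path i u0 v0 w x hne0 hd1 (fun e => hxu e.symm) (fun e => hwv e.symm) hd2
    (fun e => hxw e.symm) hadj (step2 w hw) (step1 x hx) (fun a => hno a.symm) hx hw)

/-- Merging one more old component into an already-built union. -/
lemma merge_two (h : IsDerivationOf G t T) (i : Fin t) {C : Set V}
    (hCsub : C ⊆ Set.univ) {ℓ : V → Fin k}
    (hiff : ∀ u ∈ C, ∀ v ∈ C, (SameIn (T i.succ).grps u v ↔ ℓ u = ℓ v))
    {U D : Set V} (hUC : U ⊆ C) (hDC : D ⊆ C) (hDcmp : D ∈ (T i.castSucc).cmp)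
    (hsep : ∀ u ∈ U, ∀ v ∈ D, ¬ SameIn (T i.castSucc).cmp u v)
    {eA eD : CWExpr V k} (hGA : Good G eA U ℓ) (hGD : Good G eD D ℓ) :
    ∃ e : CWExpr V k, Good G e (U ∪ D) ℓ := by
  classical
  obtain ⟨hwfA, hvA, heA, hlA⟩ := hGA
  obtain ⟨hwfD, hvD, heD, hlD⟩ := hGD
  have hdisj : Disjoint U D := by
    rw [Set.disjoint_left]
    intro u huU huD
    exact hsep u huU u huD ⟨D, hDcmp, huD, huD⟩
  set eU : CWExpr V k := CWExpr.union eA eD with heU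
  have hUverts : eU.verts = U ∪ D := by simp [heU, CWExpr.verts, hvA, hvD]
  have hUlab : ∀ v ∈ U ∪ D, eU.label v = ℓ v := by
    intro v hv
    rcases hv with hv | hv
    · have : v ∈ eA.verts := hvA ▸ hv
      simp [heU, CWExpr.label, this, hlA v hv]
    · have hnot : v ∉ eA.verts := by rw [hvA]; exact fun hmem => hdisj.ne_of_mem hmem hv rfl
      simp [heU, CWExpr.label, hnot, hlD v hv]
  have hUwf : eU.wf := ⟨hwfA, hwfD, by rw [hvA, hvD]; exact hdisj⟩
  have hUedges : ∀ u v, eU.edges u v ↔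
      (G.Adj u v ∧ u ∈ U ∧ v ∈ U) ∨ (G.Adj u v ∧ u ∈ D ∧ v ∈ D) := by
    intro u v
    show eA.edges u v ∨ eD.edges u v ↔ _
    rw [heA, heD]
  set pairs : List (Fin k × Fin k) :=
    (Finset.univ.filter (fun p : Fin k × Fin k => p.1 ≠ p.2 ∧
      ∃ u v, u ∈ U ∧ v ∈ D ∧ G.Adj u v ∧ ℓ u = p.1 ∧ ℓ v = p.2)).toList with hpairs
  have hpairs_mem : ∀ p : Fin k × Fin k, p ∈ pairs ↔ (p.1 ≠ p.2 ∧
      ∃ u v, u ∈ U ∧ v ∈ D ∧ G.Adj u v ∧ ℓ u = p.1 ∧ ℓ v = p.2) := by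
    intro p
    rw [hpairs, Finset.mem_toList, Finset.mem_filter]
    simp
  refine ⟨addAll pairs eU, addAll_wf _ _ (fun p hp => ((hpairs_mem p).1 hp).1) hUwf,
    by rw [addAll_verts, hUverts], ?_, ?_⟩
  · intro u v
    rw [addAll_edges, hUedges, hUverts]
    constructor
    · rintro ((⟨ha, h1, h2⟩ | ⟨ha, h1, h2⟩) | ⟨p, hp, h1, h2, hne, hlab⟩)
      · exact ⟨ha, Or.inl h1, Or.inl h2⟩
      · exact ⟨ha, Or.inr h1, Or.inr h2⟩
      · obtain ⟨hp12, u0, v0, hu0, hv0, hadj0, hl1, hl2⟩ := (hpairs_mem p).1 hp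
        have hcc : ¬ SameIn (T i.castSucc).cmp u0 v0 := hsep u0 hu0 v0 hv0
        have hu' : eU.label u = ℓ u := hUlab u h1
        have hv' : eU.label v = ℓ v := hUlab v h2
        rw [hu', hv'] at hlab
        rcases hlab with ⟨hLu, hLv⟩ | ⟨hLu, hLv⟩
        · -- ℓ u = ℓ u0, ℓ v = ℓ v0
          have hsu : SameIn (T i.succ).grps u0 u :=
            (hiff u0 (hUC hu0) u (Set.union_subset hUC hDC h1)).2 (by rw [hl1, hLu])
          have hsv : SameIn (T i.succ).grps v0 v :=
            (hiff v0 (hDC hv0) v (Set.union_subset hUC hDC h2)).2 (by rw [hl2, hLv])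
          exact ⟨cross_complete h i hadj0 hcc hsu hsv hne, h1, h2⟩
        · have hsu : SameIn (T i.succ).grps v0 u :=
            (hiff v0 (hDC hv0) u (Set.union_subset hUC hDC h1)).2 (by rw [hl2, hLu])
          have hsv : SameIn (T i.succ).grps u0 v :=
            (hiff u0 (hUC hu0) v (Set.union_subset hUC hDC h2)).2 (by rw [hl1, hLv])
          exact ⟨(cross_complete h i hadj0 hcc hsv hsu (Ne.symm hne)).symm, h1, h2⟩
    · rintro ⟨hadj, h1, h2⟩
      rcases h1 with h1 | h1 <;> rcases h2 with h2 | h2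
      · exact Or.inl (Or.inl ⟨hadj, h1, h2⟩)
      · -- u ∈ U, v ∈ D : cross pair
        refine Or.inr ⟨(ℓ u, ℓ v), ?_, Or.inl h1, Or.inr h2, hadj.ne, Or.inl
          ⟨hUlab u (Or.inl h1), hUlab v (Or.inr h2)⟩⟩
        refine (hpairs_mem _).2 ⟨?_, u, v, h1, h2, hadj, rfl, rfl⟩
        intro hEq
        have : SameIn (T i.succ).grps u v := (hiff u (hUC h1) v (hDC h2)).2 hEq
        exact hsep u h1 v h2 (h.edge i u v hadj.ne hadj this)
      · -- u ∈ D, v ∈ U : cross pair reversed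
        refine Or.inr ⟨(ℓ v, ℓ u), ?_, Or.inr h1, Or.inl h2, hadj.ne, Or.inr
          ⟨hUlab u (Or.inr h1), hUlab v (Or.inl h2)⟩⟩
        refine (hpairs_mem _).2 ⟨?_, v, u, h2, h1, hadj.symm, rfl, rfl⟩
        intro hEq
        have : SameIn (T i.succ).grps v u := (hiff v (hUC h2) u (hDC h1)).2 hEq
        exact hsep v h2 u h1 (h.edge i v u hadj.ne.symm hadj.symm this)
      · exact Or.inl (Or.inr ⟨hadj, h1, h2⟩)
  · intro v hv
    rw [addAll_label]
    exact hUlab v hv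

end Main


section Labels

variable {V : Type*} [Finite V] {k : ℕ}

/-- From the ability to realize every "injective" group labeling, we can
realize every group-constant labeling, using relabel operations. -/
lemma good_of_const {G : SimpleGraph V} (hk : 0 < k) {P : Set (Set V)}
    (hP : Setoid.IsPartition P) {C : Set V}
    (hwidth : {g ∈ P | g ⊆ C}.ncard ≤ k)
    (hcov : ∀ v ∈ C, ∃ g, g ∈ P ∧ v ∈ g ∧ g ⊆ C)
    (hA : ∀ ℓ₀ : V → Fin k, (∀ u ∈ C, ∀ v ∈ C, (SameIn P u v ↔ ℓ₀ u = ℓ₀ v)) →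
      ∃ e : CWExpr V k, Good G e C ℓ₀)
    (ℓ' : V → Fin k) (hconst : ∀ u ∈ C, ∀ v ∈ C, SameIn P u v → ℓ' u = ℓ' v) :
    ∃ e : CWExpr V k, Good G e C ℓ' := by
  classical
  set Q : Set (Set V) := {g ∈ P | g ⊆ C} with hQdef
  have hQfin : Q.Finite := Set.toFinite Q
  set QF : Finset (Set V) := hQfin.toFinset with hQF
  have hQFmem : ∀ g, g ∈ QF ↔ (g ∈ P ∧ g ⊆ C) := by
    intro g; rw [hQF, Set.Finite.mem_toFinset]; rfl
  have hQFcard : QF.card ≤ k := by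
    rwa [hQF, ← Set.ncard_eq_toFinset_card]
  -- the block of a vertex of C
  have hgb : ∀ v, ∃ g, v ∈ C → (g ∈ P ∧ v ∈ g ∧ g ⊆ C) := by
    intro v
    by_cases hv : v ∈ C
    · obtain ⟨g, hg⟩ := hcov v hv; exact ⟨g, fun _ => hg⟩
    · exact ⟨∅, fun hvC => absurd hvC hv⟩
  choose gb hgbspec using hgb
  -- canonical label of a group
  set τ : Set V → Fin k := fun g =>
    if h : (g ∩ C).Nonempty then ℓ' h.choose else ⟨0, hk⟩ with hτdef
  have hτ : ∀ v (hv : v ∈ C), τ (gb v) = ℓ' v := by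
    intro v hv
    obtain ⟨hgP, hvg, hgC⟩ := hgbspec v hv
    have hne : ((gb v) ∩ C).Nonempty := ⟨v, hvg, hv⟩
    rw [hτdef]
    simp only [dif_pos hne]
    have hmem := hne.choose_spec
    exact hconst _ hmem.2 v hv ⟨gb v, hgP, hmem.1, hvg⟩
  set s : Finset (Fin k) := QF.image τ with hsdef
  set d : Fin k → Set V := fun a => if h : ∃ g ∈ QF, τ g = a then h.choose else ∅ with hddef
  have hd : ∀ a ∈ s, d a ∈ QF ∧ τ (d a) = a := by
    intro a ha
    rw [hsdef, Finset.mem_image] at ha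
    obtain ⟨g, hg, hga⟩ := ha
    have hex : ∃ g ∈ QF, τ g = a := ⟨g, hg, hga⟩
    rw [hddef]
    simp only [dif_pos hex]
    exact ⟨hex.choose_spec.1, hex.choose_spec.2⟩
  set N : Finset (Set V) := QF.filter (fun g => d (τ g) ≠ g) with hNdef
  have hDeq : QF.filter (fun g => d (τ g) = g) = s.image d := by
    apply Finset.ext
    intro g
    rw [Finset.mem_filter, Finset.mem_image]
    constructor
    · rintro ⟨hgQF, hdg⟩
      exact ⟨τ g, Finset.mem_image_of_mem τ hgQF, hdg⟩
    · rintro ⟨a, ha, rfl⟩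
      obtain ⟨h1, h2⟩ := hd a ha
      exact ⟨h1, by rw [h2]⟩
  have hscard : (QF.filter (fun g => d (τ g) = g)).card = s.card := by
    rw [hDeq]
    apply Finset.card_image_of_injOn
    intro a ha b hb hEq
    rw [← (hd a ha).2, ← (hd b hb).2, hEq]
  have hNcard : N.card + s.card ≤ k := by
    rw [hNdef, ← hscard]
    have := Finset.card_filter_add_card_filter_not (s := QF)
      (p := fun g => d (τ g) ≠ g)
    simp only [not_not] at this
    calc (Finset.filter (fun g => d (τ g) ≠ g) QF).card
        + (Finset.filter (fun g => d (τ g) = g) QF).card = QF.card := this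
      _ ≤ k := hQFcard
  -- an embedding of the non-designated groups into the unused labels
  have hcard : Fintype.card { g // g ∈ N } ≤ Fintype.card { a // a ∈ sᶜ } := by
    rw [Fintype.card_coe, Fintype.card_coe, Finset.card_compl, Fintype.card_fin]
    omega
  obtain ⟨f⟩ := Function.Embedding.nonempty_of_card_le hcard
  have hfs : ∀ (g : { g // g ∈ N }), (f g : Fin k) ∉ s := fun g => Finset.mem_compl.1 (f g).2
  set ℓg : Set V → Fin k := fun g => if hg : g ∈ N then (f ⟨g, hg⟩ : Fin k) else τ g with hℓg
  have hℓg_inj : ∀ g ∈ QF, ∀ g' ∈ QF, ℓg g = ℓg g' → g = g' := by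
    intro g hg g' hg' hEq
    rw [hℓg] at hEq
    by_cases h1 : g ∈ N <;> by_cases h2 : g' ∈ N
    · simp only [dif_pos h1, dif_pos h2] at hEq
      have := f.injective (Subtype.ext hEq)
      exact congrArg Subtype.val this
    · simp only [dif_pos h1, dif_neg h2] at hEq
      exact absurd (hEq ▸ Finset.mem_image_of_mem τ hg') (hfs ⟨g, h1⟩)
    · simp only [dif_neg h1, dif_pos h2] at hEq
      exact absurd (hEq ▸ Finset.mem_image_of_mem τ hg) (hfs ⟨g', h2⟩)
    · simp only [dif_neg h1, dif_neg h2] at hEq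
      rw [hNdef, Finset.mem_filter, not_and, not_not] at h1 h2
      rw [← h1 hg, ← h2 hg', hEq]
  set ℓ₀ : V → Fin k := fun v => if hv : v ∈ C then ℓg (gb v) else ⟨0, hk⟩ with hℓ₀
  have hgbQF : ∀ v (hv : v ∈ C), gb v ∈ QF := by
    intro v hv
    obtain ⟨h1, _, h3⟩ := hgbspec v hv
    exact (hQFmem _).2 ⟨h1, h3⟩
  have hgb_eq : ∀ u (hu : u ∈ C), ∀ B ∈ P, u ∈ B → gb u = B := by
    intro u hu B hB huB
    obtain ⟨h1, h2, _⟩ := hgbspec u hu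
    exact blocks_eq hP h1 hB h2 huB
  have hiff₀ : ∀ u ∈ C, ∀ v ∈ C, (SameIn P u v ↔ ℓ₀ u = ℓ₀ v) := by
    intro u hu v hv
    constructor
    · rintro ⟨B, hB, huB, hvB⟩
      rw [hℓ₀]
      simp only [dif_pos hu, dif_pos hv]
      rw [hgb_eq u hu B hB huB, hgb_eq v hv B hB hvB]
    · intro hEq
      rw [hℓ₀] at hEq
      simp only [dif_pos hu, dif_pos hv] at hEq
      have := hℓg_inj _ (hgbQF u hu) _ (hgbQF v hv) hEq
      exact ⟨gb u, (hgbspec u hu).1, (hgbspec u hu).2.1, this ▸ (hgbspec v hv).2.1⟩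
  obtain ⟨e, he⟩ := hA ℓ₀ hiff₀
  set ps : List (Fin k × Fin k) := N.toList.map (fun g => (ℓg g, τ g)) with hps
  have hsrc : ∀ p ∈ ps, ∃ g ∈ N, p = (ℓg g, τ g) := by
    intro p hp
    rw [hps, List.mem_map] at hp
    obtain ⟨g, hg, rfl⟩ := hp
    exact ⟨g, Finset.mem_toList.1 hg, rfl⟩
  have hsrc_fresh : ∀ p ∈ ps, p.1 ∉ s := by
    intro p hp
    obtain ⟨g, hg, rfl⟩ := hsrc p hp
    rw [hℓg]
    simp only [dif_pos hg]
    exact hfs _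
  have htgt : ∀ p ∈ ps, ∀ q ∈ ps, p.2 ≠ q.1 := by
    intro p hp q hq hEq
    obtain ⟨g, hg, rfl⟩ := hsrc p hp
    have : τ g ∈ s := Finset.mem_image_of_mem τ (Finset.mem_filter.1 hg).1
    exact hsrc_fresh q hq (hEq ▸ this)
  have hnd : (ps.map Prod.fst).Nodup := by
    rw [hps, List.map_map]
    have : (Prod.fst ∘ fun g => (ℓg g, τ g)) = ℓg := rfl
    rw [this]
    refine List.Nodup.map_on ?_ N.nodup_toList
    intro g hg g' hg' hEq
    exact hℓg_inj g ((hQFmem g).2 ((hQFmem g).1 (Finset.filter_subset _ _ (Finset.mem_toList.1 hg))))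
      g' (Finset.filter_subset _ _ (Finset.mem_toList.1 hg')) hEq
  have hchain := good_chain ps he
  refine ⟨_, good_congr hchain ?_⟩
  intro v hv
  have hgQ := hgbQF v hv
  have hv₀ : ℓ₀ v = ℓg (gb v) := by rw [hℓ₀]; simp [hv]
  by_cases hgN : gb v ∈ N
  · have hmem : (ℓg (gb v), τ (gb v)) ∈ ps := by
      rw [hps, List.mem_map]
      exact ⟨gb v, Finset.mem_toList.2 hgN, rfl⟩
    rw [hv₀, chainApply_mem ps _ _ hmem hnd htgt, hτ v hv]
  · have hτs : ℓg (gb v) = τ (gb v) := by rw [hℓg]; simp [hgN]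
    have hnot : ∀ p ∈ ps, ℓ₀ v ≠ p.1 := by
      intro p hp hEq
      apply hsrc_fresh p hp
      rw [← hEq, hv₀, hτs]
      exact Finset.mem_image_of_mem τ hgQ
    rw [chainApply_of_not_src ps _ hnot, hv₀, hτs, hτ v hv]

end Labels


section MainInd

variable {V : Type*} [Fintype V] {G : SimpleGraph V} {k t : ℕ} {T : Fin (t + 1) → Template V}

lemma singleton_blocks {P : Set (Set V)} (hP : Setoid.IsPartition P)
    (hcard : P.ncard = Fintype.card V) : ∀ B ∈ P, ∃ v, B = {v} := by
  classical
  have hne : ∀ B : P, (B : Set V).Nonempty := by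
    intro B
    rcases Set.eq_empty_or_nonempty (B : Set V) with hB | hB
    · exact absurd (hB ▸ B.2) hP.1
    · exact hB
  set f : P → V := fun B => (hne B).choose with hf
  have hfmem : ∀ B : P, f B ∈ (B : Set V) := fun B => (hne B).choose_spec
  have hinj : Function.Injective f := by
    intro B B' hEq
    exact Subtype.ext (blocks_eq hP B.2 B'.2 (hfmem B) (hEq ▸ hfmem B'))
  have hcards : Nat.card P = Nat.card V := by
    rw [Nat.card_coe_set_eq, hcard, Nat.card_eq_fintype_card]
  have hbij : Function.Bijective f :=
    (Nat.bijective_iff_injective_and_card f).2 ⟨hinj, hcards⟩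
  intro B hB
  refine ⟨f ⟨B, hB⟩, ?_⟩
  ext x
  simp only [Set.mem_singleton_iff]
  constructor
  · intro hx
    obtain ⟨B', hB'⟩ := hbij.2 x
    have hxB' : x ∈ (B' : Set V) := hB' ▸ hfmem B'
    have : B' = ⟨B, hB⟩ := Subtype.ext (blocks_eq hP B'.2 hB hxB' hx)
    rw [← hB', this]
  · rintro rfl
    exact hfmem ⟨B, hB⟩

lemma derivation_good (h : IsKDerivationOf k G t T) (hk : 0 < k) :
    ∀ i : Fin (t + 1), ∀ C ∈ (T i).cmp, ∀ ℓ : V → Fin k,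
      (∀ u ∈ C, ∀ v ∈ C, (SameIn (T i).grps u v ↔ ℓ u = ℓ v)) →
      ∃ e : CWExpr V k, Good G e C ℓ := by
  intro i
  induction i using Fin.induction with
  | zero =>
      intro C hC ℓ _
      obtain ⟨v, rfl⟩ := singleton_blocks (T 0).cmp_part h.1.first C hC
      refine ⟨CWExpr.single v (ℓ v), trivial, rfl, ?_, ?_⟩
      · intro u w
        constructor
        · intro hF; exact absurd hF not_false
        · rintro ⟨hadj, rfl, h2⟩
          rw [Set.mem_singleton_iff] at h2
          exact absurd (h2 ▸ hadj) (G.loopless.irrefl _)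
      · intro x hx
        rw [Set.mem_singleton_iff] at hx
        subst hx; rfl
  | succ i ih =>
      intro C hC ℓ hiff
      -- the "any constant labeling" version at the previous step
      have Bver : ∀ D ∈ (T i.castSucc).cmp, ∀ ℓ' : V → Fin k,
          (∀ u ∈ D, ∀ v ∈ D, SameIn (T i.castSucc).grps u v → ℓ' u = ℓ' v) →
          ∃ e : CWExpr V k, Good G e D ℓ' := by
        intro D hD ℓ' hconst
        refine good_of_const hk (T i.castSucc).grps_part (h.2 i.castSucc D hD) ?_
          (fun ℓ₀ h₀ => ih D hD ℓ₀ h₀) ℓ' hconst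
        intro v hv
        obtain ⟨g, ⟨hgP, hvg⟩, -⟩ := (T i.castSucc).grps_part.2 v
        obtain ⟨C', hC', hsub⟩ := h.1.grps_refine i.castSucc g hgP
        have hCD : C' = D := blocks_eq (T i.castSucc).cmp_part hC' hD (hsub hvg) hv
        exact ⟨g, hgP, hvg, hCD ▸ hsub⟩
      have hsub𝒟 : ∀ D ∈ (T i.castSucc).cmp, D ⊆ C →
          (∀ u ∈ D, ∀ v ∈ D, SameIn (T i.castSucc).grps u v → ℓ u = ℓ v) := by
        intro D _ hDC u hu v hv hsame
        obtain ⟨g, hg, hug, hvg⟩ := hsame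
        obtain ⟨g', hg', hsub⟩ := h.1.grps_mono i g hg
        exact (hiff u (hDC hu) v (hDC hv)).1 ⟨g', hg', hsub hug, hsub hvg⟩
      have listlem : ∀ l : List (Set V), l.Nodup →
          (∀ D ∈ l, D ∈ (T i.castSucc).cmp ∧ D ⊆ C) → l ≠ [] →
          ∃ e : CWExpr V k, Good G e {v | ∃ D ∈ l, v ∈ D} ℓ := by
        intro l
        induction l with
        | nil => intro _ _ hne; exact absurd rfl hne
        | cons D l ihl =>
            intro hnd hmem _
            obtain ⟨hDc, hDC⟩ := hmem D (List.mem_cons_self)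
            obtain ⟨eD, heD⟩ := Bver D hDc ℓ (hsub𝒟 D hDc hDC)
            by_cases hl : l = []
            · subst hl
              refine ⟨eD, ?_⟩
              have hset : {v | ∃ D' ∈ [D], v ∈ D'} = D := by ext x; simp
              rw [hset]; exact heD
            · obtain ⟨eA, heA⟩ := ihl (List.nodup_cons.1 hnd).2
                (fun D' hD' => hmem D' (List.mem_cons_of_mem _ hD')) hl
              set U := {v | ∃ D' ∈ l, v ∈ D'} with hU
              have hUC : U ⊆ C := by
                rintro v ⟨D', hD', hvD'⟩
                exact (hmem D' (List.mem_cons_of_mem _ hD')).2 hvD'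
              have hsep : ∀ u ∈ U, ∀ v ∈ D, ¬ SameIn (T i.castSucc).cmp u v := by
                rintro u ⟨D', hD', huD'⟩ v hv ⟨B, hB, huB, hvB⟩
                have h1 : B = D' := blocks_eq (T i.castSucc).cmp_part hB
                  (hmem D' (List.mem_cons_of_mem _ hD')).1 huB huD'
                have h2 : B = D := blocks_eq (T i.castSucc).cmp_part hB hDc hvB hv
                exact (List.nodup_cons.1 hnd).1 (by rw [← h2, h1]; exact hD')
              obtain ⟨e, he⟩ := merge_two h.1 i (Set.subset_univ C) hiff hUC hDC hDc hsep heA heD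
              refine ⟨e, ?_⟩
              have hset : U ∪ D = {v | ∃ D' ∈ D :: l, v ∈ D'} := by
                ext x
                simp only [hU, Set.mem_union, Set.mem_setOf_eq, List.mem_cons]
                constructor
                · rintro (⟨D', hD', hx⟩ | hx)
                  · exact ⟨D', Or.inr hD', hx⟩
                  · exact ⟨D, Or.inl rfl, hx⟩
                · rintro ⟨D', (rfl | hD'), hx⟩
                  · exact Or.inr hx
                  · exact Or.inl ⟨D', hD', hx⟩
              rw [← hset]; exact he
      -- assemble: C is the union of the old components inside it
      classical
      set 𝒟 : Set (Set V) := {D | D ∈ (T i.castSucc).cmp ∧ D ⊆ C} with h𝒟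
      have h𝒟fin : 𝒟.Finite := Set.toFinite 𝒟
      set l : List (Set V) := h𝒟fin.toFinset.toList with hl
      have hlmem : ∀ D, D ∈ l ↔ D ∈ 𝒟 := by
        intro D; rw [hl, Finset.mem_toList, Set.Finite.mem_toFinset]
      have hCne : C.Nonempty := by
        rcases Set.eq_empty_or_nonempty C with hE | hE
        · exact absurd (hE ▸ hC) (T i.succ).cmp_part.1
        · exact hE
      have holdcomp : ∀ v ∈ C, ∃ D, D ∈ 𝒟 ∧ v ∈ D := by
        intro v hv
        obtain ⟨D, ⟨hDc, hvD⟩, -⟩ := (T i.castSucc).cmp_part.2 v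
        obtain ⟨C'', hC'', hsub⟩ := h.1.cmp_mono i D hDc
        have : C'' = C := blocks_eq (T i.succ).cmp_part hC'' hC (hsub hvD) hv
        exact ⟨D, ⟨hDc, this ▸ hsub⟩, hvD⟩
      have hlne : l ≠ [] := by
        obtain ⟨v, hv⟩ := hCne
        obtain ⟨D, hD, -⟩ := holdcomp v hv
        intro hnil
        exact absurd ((hlmem D).2 hD) (by rw [hnil]; exact List.not_mem_nil)
      obtain ⟨e, he⟩ := listlem l (Finset.nodup_toList _)
        (fun D hD => ((hlmem D).1 hD)) hlne
      refine ⟨e, ?_⟩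
      have hset : {v | ∃ D ∈ l, v ∈ D} = C := by
        ext v
        simp only [Set.mem_setOf_eq]
        constructor
        · rintro ⟨D, hD, hvD⟩
          exact ((hlmem D).1 hD).2 hvD
        · intro hv
          obtain ⟨D, hD, hvD⟩ := holdcomp v hv
          exact ⟨D, (hlmem D).2 hD, hvD⟩
      rw [← hset]; exact he

end MainInd

/-- From a `k`-derivation of `G` one obtains a `k`-expression of
`G`; in particular the clique-width of `G` is at most `k`. -/
theorem kDerivation_to_kExpression {V : Type*} [Fintype V]
    (G : SimpleGraph V) (k t : ℕ) (T : Fin (t + 1) → Template V)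
    (h : IsKDerivationOf k G t T) :
    (∃ e : CWExpr V k, e.Defines G) ∧ CliqueWidth G ≤ k := by
  classical
  obtain ⟨B, hBeq⟩ := Set.ncard_eq_one.1 h.1.last
  have hB : B ∈ (T (Fin.last t)).cmp := by rw [hBeq]; rfl
  have hBuniv : B = Set.univ := by
    apply Set.eq_univ_of_forall
    intro v
    obtain ⟨D, ⟨hD, hvD⟩, -⟩ := (T (Fin.last t)).cmp_part.2 v
    have : D = B := by
      have : D ∈ ({B} : Set (Set V)) := hBeq ▸ hD
      exact this
    exact this ▸ hvD
  have hcov : ∀ C ∈ (T (Fin.last t)).cmp, ∀ v ∈ C, ∃ g, g ∈ (T (Fin.last t)).grps ∧ v ∈ g ∧ g ⊆ C := by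
    intro C hC v hv
    obtain ⟨g, ⟨hgP, hvg⟩, -⟩ := (T (Fin.last t)).grps_part.2 v
    obtain ⟨C', hC', hsub⟩ := h.1.grps_refine (Fin.last t) g hgP
    have hCD : C' = C := blocks_eq (T (Fin.last t)).cmp_part hC' hC (hsub hvg) hv
    exact ⟨g, hgP, hvg, hCD ▸ hsub⟩
  have hBne : B.Nonempty := by
    rcases Set.eq_empty_or_nonempty B with hE | hE
    · exact absurd (hE ▸ hB) (T (Fin.last t)).cmp_part.1
    · exact hE
  have hk : 0 < k := by
    obtain ⟨v, hv⟩ := hBne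
    obtain ⟨g, hg1, hg2, hg3⟩ := hcov B hB v hv
    have h1 : 0 < {g ∈ (T (Fin.last t)).grps | g ⊆ B}.ncard := by
      rw [Set.ncard_pos (Set.toFinite _)]
      exact ⟨g, hg1, hg3⟩
    exact lt_of_lt_of_le h1 (h.2 (Fin.last t) B hB)
  obtain ⟨e, hwf, hverts, hedges, -⟩ :=
    good_of_const (G := G) hk (T (Fin.last t)).grps_part (h.2 (Fin.last t) B hB)
      (hcov B hB) (derivation_good h hk (Fin.last t) B hB)
      (fun _ => ⟨0, hk⟩) (fun _ _ _ _ _ => rfl)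
  have hdef : e.Defines G := by
    refine ⟨hwf, by rw [hverts, hBuniv], ?_⟩
    intro u v
    rw [hedges u v, hBuniv]
    simp
  exact ⟨⟨e, hdef⟩, Nat.sInf_le ⟨e, hdef⟩⟩
end

section
/- If G has a universal vertex v (a vertex adjacent to all other vertices) and G has at least 2 vertices, then the clique-width of G equals the maximum of 2 and the clique-width of G - v. -/
namespace CWExpr

variable {V : Type*} {W : Type*} {k k' : ℕ}

lemma verts_nonempty : ∀ e : CWExpr V k, e.verts.Nonempty
  | single w _ => ⟨w, rfl⟩
  | union a b => (verts_nonempty a).mono Set.subset_union_left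
  | relabel _ _ a => verts_nonempty a
  | addEdges _ _ a => verts_nonempty a

lemma edges_mem_verts : ∀ (e : CWExpr V k) {u w : V}, e.edges u w → u ∈ e.verts ∧ w ∈ e.verts
  | single _ _, _, _, h => h.elim
  | union a b, u, w, h => by
      rcases h with h | h
      · exact ⟨Set.subset_union_left (edges_mem_verts a h).1,
          Set.subset_union_left (edges_mem_verts a h).2⟩
      · exact ⟨Set.subset_union_right (edges_mem_verts b h).1,
          Set.subset_union_right (edges_mem_verts b h).2⟩
  | relabel _ _ a, _, _, h => edges_mem_verts a h
  | addEdges _ _ a, u, w, h => by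
      rcases h with h | ⟨h1, h2, _⟩
      · exact edges_mem_verts a h
      · exact ⟨h1, h2⟩

lemma no_edges_of_le_one (hk : k ≤ 1) :
    ∀ e : CWExpr V k, e.wf → ∀ u w : V, ¬ e.edges u w
  | single _ _, _, _, _, h => h
  | union a b, ⟨ha, hb, _⟩, u, w, h =>
      h.elim (no_edges_of_le_one hk a ha u w) (no_edges_of_le_one hk b hb u w)
  | relabel _ _ a, ha, u, w, h => no_edges_of_le_one hk a ha u w h
  | addEdges i j a, ⟨hij, ha⟩, u, w, h => by
      rcases h with h | ⟨_, _, _, _⟩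
      · exact no_edges_of_le_one hk a ha u w h
      · exact hij (Fin.ext (by omega))

/-! ### Casting to a larger number of labels -/

def castLE (h : k ≤ k') : CWExpr V k → CWExpr V k'
  | single w i => single w (i.castLE h)
  | union a b => union (castLE h a) (castLE h b)
  | relabel i j a => relabel (i.castLE h) (j.castLE h) (castLE h a)
  | addEdges i j a => addEdges (i.castLE h) (j.castLE h) (castLE h a)

lemma verts_castLE (h : k ≤ k') : ∀ e : CWExpr V k, (castLE h e).verts = e.verts
  | single _ _ => rfl
  | union a b => by simp only [castLE, verts, verts_castLE h a, verts_castLE h b]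
  | relabel _ _ a => verts_castLE h a
  | addEdges _ _ a => verts_castLE h a

lemma label_castLE (h : k ≤ k') : ∀ (e : CWExpr V k) (u : V),
    (castLE h e).label u = (e.label u).castLE h
  | single _ _, _ => rfl
  | union a b, u => by
      simp only [castLE, label]
      rw [verts_castLE h a]
      by_cases hu : u ∈ a.verts
      · rw [if_pos hu, if_pos hu, label_castLE h a]
      · rw [if_neg hu, if_neg hu, label_castLE h b]
  | relabel i j a, u => by
      simp only [castLE, label, label_castLE h a]
      split_ifs with h1 h2 h3 <;> first | rfl | simp_all [Fin.castLE_inj]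
  | addEdges _ _ a, u => label_castLE h a u

lemma edges_castLE (h : k ≤ k') : ∀ (e : CWExpr V k) (u w : V),
    (castLE h e).edges u w ↔ e.edges u w
  | single _ _, _, _ => Iff.rfl
  | union a b, u, w => by
      simp only [castLE, edges, edges_castLE h a, edges_castLE h b]
  | relabel _ _ a, u, w => edges_castLE h a u w
  | addEdges i j a, u, w => by
      simp only [castLE, edges, edges_castLE h a, verts_castLE h a, label_castLE h a,
        Fin.castLE_inj]

lemma wf_castLE (h : k ≤ k') : ∀ e : CWExpr V k, e.wf → (castLE h e).wf
  | single _ _, _ => trivial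
  | union a b, ⟨ha, hb, hd⟩ =>
      ⟨wf_castLE h a ha, wf_castLE h b hb, by rw [verts_castLE, verts_castLE]; exact hd⟩
  | relabel _ _ a, ha => wf_castLE h a ha
  | addEdges i j a, ⟨hij, ha⟩ =>
      ⟨fun hc => hij (Fin.castLE_injective h hc), wf_castLE h a ha⟩

lemma defines_castLE (h : k ≤ k') {G : SimpleGraph V} {e : CWExpr V k} (he : e.Defines G) :
    (castLE h e).Defines G :=
  ⟨wf_castLE h e he.1, by rw [verts_castLE]; exact he.2.1,
   fun u w => (edges_castLE h e u w).trans (he.2.2 u w)⟩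

/-! ### Mapping along an injective map of vertex types -/

def mapV (f : W → V) : CWExpr W k → CWExpr V k
  | single w i => single (f w) i
  | union a b => union (mapV f a) (mapV f b)
  | relabel i j a => relabel i j (mapV f a)
  | addEdges i j a => addEdges i j (mapV f a)

lemma verts_mapV (f : W → V) : ∀ e : CWExpr W k, (mapV f e).verts = f '' e.verts
  | single _ _ => (Set.image_singleton).symm
  | union a b => by
      simp only [mapV, verts, verts_mapV f a, verts_mapV f b, Set.image_union]
  | relabel _ _ a => verts_mapV f a
  | addEdges _ _ a => verts_mapV f a

lemma label_mapV {f : W → V} (hf : Function.Injective f) :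
    ∀ (e : CWExpr W k) (w : W), (mapV f e).label (f w) = e.label w
  | single _ _, _ => rfl
  | union a b, w => by
      simp only [mapV, label]
      rw [verts_mapV f a, hf.mem_set_image]
      by_cases hw : w ∈ a.verts
      · rw [if_pos hw, if_pos hw, label_mapV hf a]
      · rw [if_neg hw, if_neg hw, label_mapV hf b]
  | relabel i j a, w => by simp only [mapV, label, label_mapV hf a]
  | addEdges _ _ a, w => label_mapV hf a w

lemma edges_mapV {f : W → V} (hf : Function.Injective f) :
    ∀ (e : CWExpr W k) (x y : V),
      (mapV f e).edges x y ↔ ∃ u w, f u = x ∧ f w = y ∧ e.edges u w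
  | single _ _, x, y => by simp [mapV, edges]
  | union a b, x, y => by
      simp only [mapV, edges]
      rw [edges_mapV hf a x y, edges_mapV hf b x y]
      constructor
      · rintro (⟨u, w, rfl, rfl, h⟩ | ⟨u, w, rfl, rfl, h⟩)
        · exact ⟨u, w, rfl, rfl, Or.inl h⟩
        · exact ⟨u, w, rfl, rfl, Or.inr h⟩
      · rintro ⟨u, w, rfl, rfl, h | h⟩
        · exact Or.inl ⟨u, w, rfl, rfl, h⟩
        · exact Or.inr ⟨u, w, rfl, rfl, h⟩
  | relabel i j a, x, y => edges_mapV hf a x y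
  | addEdges i j a, x, y => by
      simp only [mapV, edges]
      constructor
      · rintro (h | ⟨hx, hy, hxy, hl⟩)
        · obtain ⟨u, w, rfl, rfl, h2⟩ := (edges_mapV hf a x y).mp h
          exact ⟨u, w, rfl, rfl, Or.inl h2⟩
        · rw [verts_mapV] at hx hy
          obtain ⟨u, hu, rfl⟩ := hx
          obtain ⟨w, hw, rfl⟩ := hy
          rw [label_mapV hf, label_mapV hf] at hl
          exact ⟨u, w, rfl, rfl, Or.inr ⟨hu, hw, fun h => hxy (by rw [h]), hl⟩⟩
      · rintro ⟨u, w, rfl, rfl, h | ⟨hu, hw, huw, hl⟩⟩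
        · exact Or.inl ((edges_mapV hf a _ _).mpr ⟨u, w, rfl, rfl, h⟩)
        · refine Or.inr ⟨?_, ?_, fun h => huw (hf h), ?_⟩
          · rw [verts_mapV]; exact ⟨u, hu, rfl⟩
          · rw [verts_mapV]; exact ⟨w, hw, rfl⟩
          · rw [label_mapV hf, label_mapV hf]; exact hl

lemma wf_mapV {f : W → V} (hf : Function.Injective f) :
    ∀ e : CWExpr W k, e.wf → (mapV f e).wf
  | single _ _, _ => trivial
  | union a b, ⟨ha, hb, hd⟩ => ⟨wf_mapV hf a ha, wf_mapV hf b hb, by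
      rw [verts_mapV, verts_mapV]
      exact (Set.disjoint_image_iff hf).mpr hd⟩
  | relabel _ _ a, ha => wf_mapV hf a ha
  | addEdges _ _ a, ⟨hij, ha⟩ => ⟨hij, wf_mapV hf a ha⟩

/-! ### Restriction to a subset of the vertices -/

def ounion {X : Type*} : Option (CWExpr X k) → Option (CWExpr X k) → Option (CWExpr X k)
  | none, ob => ob
  | some a, none => some a
  | some a, some b => some (union a b)

open Classical in
noncomputable def restrict (p : V → Prop) : CWExpr V k → Option (CWExpr (Subtype p) k)
  | single w i => if h : p w then some (single ⟨w, h⟩ i) else none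
  | union a b => ounion (restrict p a) (restrict p b)
  | relabel i j a => (restrict p a).map (relabel i j)
  | addEdges i j a => (restrict p a).map (addEdges i j)

lemma restrict_none (p : V → Prop) :
    ∀ e : CWExpr V k, restrict p e = none → ∀ w ∈ e.verts, ¬ p w := by
  intro e
  induction e with
  | single w i =>
      intro h x hx hp
      simp only [verts, Set.mem_singleton_iff] at hx
      subst hx
      rw [restrict, dif_pos hp] at h
      simp at h
  | union a b iha ihb =>
      intro h x hx hp
      rw [restrict] at h
      simp only [verts, Set.mem_union] at hx
      cases ha : restrict p a <;> cases hb : restrict p b <;>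
        rw [ha, hb] at h <;> simp only [ounion] at h
      · rcases hx with hx | hx
        · exact iha ha x hx hp
        · exact ihb hb x hx hp
      all_goals simp at h
  | relabel i j a iha =>
      intro h x hx hp
      rw [restrict] at h
      cases ha : restrict p a
      · exact iha ha x hx hp
      · rw [ha] at h; simp at h
  | addEdges i j a iha =>
      intro h x hx hp
      rw [restrict] at h
      cases ha : restrict p a
      · exact iha ha x hx hp
      · rw [ha] at h; simp at h

lemma verts_restrict (p : V → Prop) :
    ∀ (e : CWExpr V k) (e' : CWExpr (Subtype p) k), restrict p e = some e' →
      e'.verts = Subtype.val ⁻¹' e.verts := by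
  intro e
  induction e with
  | single w i =>
      intro e' h
      by_cases hp : p w
      · rw [restrict, dif_pos hp] at h
        cases h
        ext x
        simp [verts, Subtype.ext_iff]
      · rw [restrict, dif_neg hp] at h
        simp at h
  | union a b iha ihb =>
      intro e' h
      rw [restrict] at h
      cases ha : restrict p a <;> cases hb : restrict p b <;>
        rw [ha, hb] at h <;> simp only [ounion] at h
      · simp at h
      · cases h
        rw [ihb _ hb]
        ext x
        simp only [Set.mem_preimage, verts, Set.mem_union]
        exact ⟨Or.inr, fun hx => hx.resolve_left (fun hxa => restrict_none p a ha _ hxa x.2)⟩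
      · cases h
        rw [iha _ ha]
        ext x
        simp only [Set.mem_preimage, verts, Set.mem_union]
        exact ⟨Or.inl, fun hx => hx.resolve_right (fun hxb => restrict_none p b hb _ hxb x.2)⟩
      · cases h
        simp only [verts, iha _ ha, ihb _ hb, Set.preimage_union]
  | relabel i j a iha =>
      intro e' h
      rw [restrict] at h
      cases ha : restrict p a <;> rw [ha] at h
      · simp at h
      · simp only [Option.map_some] at h
        cases h
        simp only [verts]
        exact iha _ ha
  | addEdges i j a iha =>
      intro e' h
      rw [restrict] at h
      cases ha : restrict p a <;> rw [ha] at h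
      · simp at h
      · simp only [Option.map_some] at h
        cases h
        simp only [verts]
        exact iha _ ha

lemma label_restrict (p : V → Prop) :
    ∀ (e : CWExpr V k) (e' : CWExpr (Subtype p) k), restrict p e = some e' →
      ∀ x : Subtype p, x ∈ e'.verts → e'.label x = e.label ↑x := by
  intro e
  induction e with
  | single w i =>
      intro e' h x hx
      by_cases hp : p w
      · rw [restrict, dif_pos hp] at h
        cases h; rfl
      · rw [restrict, dif_neg hp] at h
        simp at h
  | union a b iha ihb =>
      intro e' h x hx
      rw [restrict] at h
      cases ha : restrict p a <;> cases hb : restrict p b <;>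
        rw [ha, hb] at h <;> simp only [ounion] at h
      · simp at h
      · cases h
        have hxa : ¬ (↑x ∈ a.verts) := fun hxa => restrict_none p a ha _ hxa x.2
        simp only [label, if_neg hxa]
        exact ihb _ hb x hx
      · cases h
        have hxa : ↑x ∈ a.verts := by
          have := verts_restrict p a _ ha
          rw [this] at hx
          exact hx
        simp only [label, if_pos hxa]
        exact iha _ ha x hx
      · cases h
        have hva := verts_restrict p a _ ha
        simp only [label]
        by_cases hxa : (↑x : V) ∈ a.verts
        · rw [hva, if_pos (Set.mem_preimage.mpr hxa), if_pos hxa]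
          exact iha _ ha x (by rw [hva]; exact Set.mem_preimage.mpr hxa)
        · rw [hva, if_neg (fun hc => hxa (Set.mem_preimage.mp hc)), if_neg hxa]
          refine ihb _ hb x ?_
          simp only [verts, Set.mem_union] at hx
          refine hx.resolve_left (fun h' => hxa ?_)
          rw [hva] at h'
          exact Set.mem_preimage.mp h'
  | relabel i j a iha =>
      intro e' h x hx
      rw [restrict] at h
      cases ha : restrict p a <;> rw [ha] at h
      · simp at h
      · simp only [Option.map_some] at h
        cases h
        simp only [label, iha _ ha x hx]
  | addEdges i j a iha =>
      intro e' h x hx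
      rw [restrict] at h
      cases ha : restrict p a <;> rw [ha] at h
      · simp at h
      · simp only [Option.map_some] at h
        cases h
        exact iha _ ha x hx

end CWExpr

namespace CWExpr

variable {V : Type*} {W : Type*} {k k' : ℕ}

lemma edges_restrict (p : V → Prop) :
    ∀ (e : CWExpr V k) (e' : CWExpr (Subtype p) k), restrict p e = some e' →
      ∀ x y : Subtype p, e'.edges x y ↔ e.edges ↑x ↑y := by
  intro e
  induction e with
  | single w i =>
      intro e' h x y
      by_cases hp : p w
      · rw [restrict, dif_pos hp] at h
        cases h; exact Iff.rfl
      · rw [restrict, dif_neg hp] at h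
        simp at h
  | union a b iha ihb =>
      intro e' h x y
      rw [restrict] at h
      cases ha : restrict p a <;> cases hb : restrict p b <;>
        rw [ha, hb] at h <;> simp only [ounion] at h
      · simp at h
      · cases h
        simp only [edges]
        rw [ihb _ hb]
        have : ¬ a.edges ↑x ↑y := fun hE =>
          restrict_none p a ha _ (edges_mem_verts a hE).1 x.2
        tauto
      · cases h
        simp only [edges]
        rw [iha _ ha]
        have : ¬ b.edges ↑x ↑y := fun hE =>
          restrict_none p b hb _ (edges_mem_verts b hE).1 x.2
        tauto
      · cases h
        simp only [edges]
        rw [iha _ ha, ihb _ hb]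
  | relabel i j a iha =>
      intro e' h x y
      rw [restrict] at h
      cases ha : restrict p a <;> rw [ha] at h
      · simp at h
      · simp only [Option.map_some] at h
        cases h
        exact iha _ ha x y
  | addEdges i j a iha =>
      intro e' h x y
      rw [restrict] at h
      cases ha : restrict p a <;> rw [ha] at h
      · simp at h
      · simp only [Option.map_some] at h
        cases h
        have hva := verts_restrict p a _ ha
        simp only [edges]
        constructor
        · rintro (hE | ⟨hx, hy, hxy, hl⟩)
          · exact Or.inl ((iha _ ha x y).mp hE)
          · refine Or.inr ⟨by rw [hva] at hx; exact hx, by rw [hva] at hy; exact hy,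
              fun hc => hxy (Subtype.ext hc), ?_⟩
            rw [← label_restrict p a _ ha x hx, ← label_restrict p a _ ha y hy]
            exact hl
        · rintro (hE | ⟨hx, hy, hxy, hl⟩)
          · exact Or.inl ((iha _ ha x y).mpr hE)
          · refine Or.inr ⟨by rw [hva]; exact hx, by rw [hva]; exact hy,
              fun hc => hxy (by rw [hc]), ?_⟩
            rw [label_restrict p a _ ha x (by rw [hva]; exact hx),
              label_restrict p a _ ha y (by rw [hva]; exact hy)]
            exact hl
  
lemma wf_restrict (p : V → Prop) :
    ∀ e : CWExpr V k, e.wf → ∀ e', restrict p e = some e' → e'.wf := by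
  intro e
  induction e with
  | single w i =>
      intro _ e' h
      by_cases hp : p w
      · rw [restrict, dif_pos hp] at h
        cases h; trivial
      · rw [restrict, dif_neg hp] at h
        simp at h
  | union a b iha ihb =>
      intro hw e' h
      obtain ⟨ha', hb', hd⟩ := hw
      rw [restrict] at h
      cases ha : restrict p a <;> cases hb : restrict p b <;>
        rw [ha, hb] at h <;> simp only [ounion] at h
      · simp at h
      · cases h; exact ihb hb' _ hb
      · cases h; exact iha ha' _ ha
      · cases h
        refine ⟨iha ha' _ ha, ihb hb' _ hb, ?_⟩
        rw [verts_restrict p a _ ha, verts_restrict p b _ hb]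
        exact hd.preimage _
  | relabel i j a iha =>
      intro hw e' h
      rw [restrict] at h
      cases ha : restrict p a <;> rw [ha] at h
      · simp at h
      · simp only [Option.map_some] at h
        cases h
        have hres := iha hw _ ha
        exact hres
  | addEdges i j a iha =>
      intro hw e' h
      rw [restrict] at h
      cases ha : restrict p a <;> rw [ha] at h
      · simp at h
      · simp only [Option.map_some] at h
        cases h
        have hres := iha hw.2 _ ha
        exact ⟨hw.1, hres⟩

lemma restrict_some (p : V → Prop) {x : V} (hx : p x) (e : CWExpr V k)
    (hxe : x ∈ e.verts) : ∃ e', restrict p e = some e' := by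
  cases h : restrict p e with
  | none => exact absurd hx (restrict_none p e h x hxe)
  | some e' => exact ⟨e', rfl⟩

/-! ### Relabelling a list of labels to a fixed label -/

def relabelSeq (z : Fin k) : List (Fin k) → CWExpr V k → CWExpr V k
  | [], e => e
  | i :: t, e => relabelSeq z t (relabel i z e)

lemma verts_relabelSeq (z : Fin k) :
    ∀ (L : List (Fin k)) (e : CWExpr V k), (relabelSeq z L e).verts = e.verts
  | [], e => rfl
  | i :: t, e => verts_relabelSeq z t (relabel i z e)

lemma edges_relabelSeq (z : Fin k) :
    ∀ (L : List (Fin k)) (e : CWExpr V k) (u w : V),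
      (relabelSeq z L e).edges u w ↔ e.edges u w
  | [], e, u, w => Iff.rfl
  | i :: t, e, u, w => edges_relabelSeq z t (relabel i z e) u w

lemma wf_relabelSeq (z : Fin k) :
    ∀ (L : List (Fin k)) (e : CWExpr V k), e.wf → (relabelSeq z L e).wf
  | [], e, hw => hw
  | i :: t, e, hw => wf_relabelSeq z t (relabel i z e) hw

lemma label_relabelSeq (z : Fin k) :
    ∀ (L : List (Fin k)) (e : CWExpr V k) (u : V),
      (relabelSeq z L e).label u = if e.label u ∈ L then z else e.label u
  | [], e, u => by simp [relabelSeq]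
  | i :: t, e, u => by
      rw [show relabelSeq z (i :: t) e = relabelSeq z t (relabel i z e) from rfl,
        label_relabelSeq z t (relabel i z e) u]
      simp only [label, List.mem_cons]
      by_cases h1 : e.label u = i
      · simp [h1]
      · simp [h1]

/-! ### A generic expression for an arbitrary finite graph -/

def uSingles {n : ℕ} (f : W → Fin n) : W → List W → CWExpr W n
  | w, [] => single w (f w)
  | w, x :: t => union (single w (f w)) (uSingles f x t)

lemma verts_uSingles {n : ℕ} (f : W → Fin n) :
    ∀ (w : W) (l : List W), (uSingles f w l).verts = {x | x ∈ w :: l}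
  | w, [] => by ext x; simp [uSingles, verts]
  | w, x :: t => by
      ext y
      simp only [uSingles, verts, Set.mem_union, verts_uSingles f x t]
      simp [or_assoc]

lemma label_uSingles {n : ℕ} (f : W → Fin n) :
    ∀ (w : W) (l : List W) (u : W), u ∈ w :: l → (uSingles f w l).label u = f u
  | w, [], u, hu => by
      simp only [List.mem_singleton] at hu
      subst hu; rfl
  | w, x :: t, u, hu => by
      simp only [uSingles, label, verts]
      by_cases h : u ∈ ({w} : Set W)
      · refine (if_pos (c := u ∈ (single w (f w)).verts) h).trans ?_
        rw [Set.mem_singleton_iff] at h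
        subst h; rfl
      · refine (if_neg (c := u ∈ (single w (f w)).verts) h).trans ?_
        refine label_uSingles f x t u ?_
        cases hu with
        | head => exact absurd rfl h
        | tail _ hu => exact hu

lemma edges_uSingles {n : ℕ} (f : W → Fin n) :
    ∀ (w : W) (l : List W) (u x : W), ¬ (uSingles f w l).edges u x
  | w, [], u, x, h => h
  | w, x :: t, u, y, h => h.elim id (edges_uSingles f x t u y)

lemma wf_uSingles {n : ℕ} (f : W → Fin n) :
    ∀ (w : W) (l : List W), (w :: l).Nodup → (uSingles f w l).wf
  | w, [], _ => trivial
  | w, x :: t, hnd => by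
      refine ⟨trivial, wf_uSingles f x t (List.nodup_cons.mp hnd).2, ?_⟩
      rw [verts_uSingles f x t]
      simp only [verts]
      rw [Set.disjoint_singleton_left]
      exact (List.nodup_cons.mp hnd).1

def addAll {n : ℕ} (f : W → Fin n) : List (W × W) → CWExpr W n → CWExpr W n
  | [], e => e
  | q :: t, e => addAll f t (addEdges (f q.1) (f q.2) e)

lemma verts_addAll {n : ℕ} (f : W → Fin n) :
    ∀ (P : List (W × W)) (e : CWExpr W n), (addAll f P e).verts = e.verts
  | [], e => rfl
  | q :: t, e => verts_addAll f t _

lemma label_addAll {n : ℕ} (f : W → Fin n) :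
    ∀ (P : List (W × W)) (e : CWExpr W n) (u : W), (addAll f P e).label u = e.label u
  | [], e, u => rfl
  | q :: t, e, u => label_addAll f t _ u

lemma wf_addAll {n : ℕ} (f : W → Fin n) :
    ∀ (P : List (W × W)), (∀ q ∈ P, f q.1 ≠ f q.2) →
      ∀ e : CWExpr W n, e.wf → (addAll f P e).wf
  | [], _, e, hw => hw
  | q :: t, hP, e, hw =>
      wf_addAll f t (fun q' hq' => hP q' (List.mem_cons_of_mem q hq'))
        _ ⟨hP q List.mem_cons_self, hw⟩

lemma edges_addAll {n : ℕ} {f : W → Fin n} (hf : Function.Injective f) :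
    ∀ (P : List (W × W)) (e : CWExpr W n), e.verts = Set.univ →
      (∀ u, e.label u = f u) → ∀ u w,
      (addAll f P e).edges u w ↔
        e.edges u w ∨ ∃ q ∈ P, u ≠ w ∧ ((u = q.1 ∧ w = q.2) ∨ (u = q.2 ∧ w = q.1))
  | [], e, hv, hl, u, w => by simp [addAll]
  | q :: t, e, hv, hl, u, w => by
      rw [addAll]
      rw [edges_addAll hf t _ (by simpa [verts] using hv) (fun u => by simp [label, hl])]
      simp only [edges, hv, Set.mem_univ, true_and, hl, hf.eq_iff, List.mem_cons]
      constructor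
      · rintro ((h | h) | ⟨q', hq', h⟩)
        · exact Or.inl h
        · exact Or.inr ⟨q, Or.inl rfl, h⟩
        · exact Or.inr ⟨q', Or.inr hq', h⟩
      · rintro (h | ⟨q', (rfl | hq'), h⟩)
        · exact Or.inl (Or.inl h)
        · exact Or.inl (Or.inr h)
        · exact Or.inr ⟨q', hq', h⟩

lemma exists_defines (W : Type*) [Fintype W] [Nonempty W] (H : SimpleGraph W) :
    ∃ e : CWExpr W (Fintype.card W), e.Defines H := by
  classical
  set n := Fintype.card W with hn
  let f : W → Fin n := Fintype.equivFin W
  have hf : Function.Injective f := (Fintype.equivFin W).injective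
  obtain ⟨w, t, hlist⟩ : ∃ w t, (Finset.univ : Finset W).toList = w :: t := by
    cases hl : (Finset.univ : Finset W).toList with
    | nil =>
        exfalso
        have := Finset.mem_toList.mpr (Finset.mem_univ (Classical.arbitrary W))
        rw [hl] at this
        exact List.not_mem_nil this
    | cons w t => exact ⟨w, t, rfl⟩
  have hmem : ∀ x : W, x ∈ w :: t := fun x => by
    rw [← hlist]; exact Finset.mem_toList.mpr (Finset.mem_univ x)
  have hnd : (w :: t).Nodup := hlist ▸ Finset.nodup_toList _
  let e0 := uSingles f w t
  have hv0 : e0.verts = Set.univ := by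
    show (uSingles f w t).verts = Set.univ
    rw [verts_uSingles]
    ext x
    simp only [Set.mem_setOf_eq, Set.mem_univ, iff_true]
    exact hmem x
  have hl0 : ∀ u, e0.label u = f u := fun u => label_uSingles f w t u (hmem u)
  let P := (Finset.univ.filter (fun q : W × W => H.Adj q.1 q.2)).toList
  have hP : ∀ q, q ∈ P ↔ H.Adj q.1 q.2 := fun q => by
    simp [P, Finset.mem_toList]
  refine ⟨addAll f P e0, ?_, ?_, ?_⟩
  · refine wf_addAll f P (fun q hq => ?_) e0 (wf_uSingles f w t hnd)
    exact fun hc => ((hP q).mp hq).ne (hf hc)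
  · rw [verts_addAll]; exact hv0
  · intro u x
    rw [edges_addAll hf P e0 hv0 hl0]
    constructor
    · rintro (h | ⟨q, hq, hux, (⟨rfl, rfl⟩ | ⟨rfl, rfl⟩)⟩)
      · exact absurd h (edges_uSingles f w t u x)
      · exact (hP q).mp hq
      · exact ((hP q).mp hq).symm
    · intro h
      exact Or.inr ⟨(u, x), (hP (u, x)).mpr h, h.ne, Or.inl ⟨rfl, rfl⟩⟩

end CWExpr

open CWExpr in
lemma defines_add_universal {V : Type*} {k : ℕ} {G : SimpleGraph V} {v : V}
    (huniv : ∀ w, w ≠ v → G.Adj v w) {z0 z1 : Fin k} (hz : z0 ≠ z1)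
    {e2 : CWExpr V k} (hwf : e2.wf) (hv : e2.verts = ({v}ᶜ : Set V))
    (hl0 : ∀ u, e2.label u = z0)
    (hE : ∀ u w, e2.edges u w ↔ (u ≠ v ∧ w ≠ v ∧ G.Adj u w)) :
    (CWExpr.addEdges z0 z1 (CWExpr.union e2 (CWExpr.single v z1))).Defines G := by
  classical
  have hmem : ∀ x : V, x ∈ e2.verts ↔ x ≠ v := by
    intro x; rw [hv]; exact Set.mem_compl_singleton_iff
  have hlab : ∀ u : V, (CWExpr.union e2 (CWExpr.single v z1)).label u
      = if u ∈ e2.verts then z0 else z1 := by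
    intro u
    simp only [CWExpr.label]
    by_cases h : u ∈ e2.verts
    · rw [if_pos h, if_pos h, hl0 u]
    · rw [if_neg h, if_neg h]
  refine ⟨⟨hz, hwf, trivial, ?_⟩, ?_, ?_⟩
  · show Disjoint e2.verts ({v} : Set V)
    rw [hv]; exact disjoint_compl_left
  · show e2.verts ∪ {v} = Set.univ
    rw [hv]; exact Set.compl_union_self _
  · intro u w
    simp only [CWExpr.edges, CWExpr.verts, Set.mem_union, or_false]
    constructor
    · rintro (h | ⟨hu1, hw1, huw, hl⟩)
      · exact ((hE u w).mp h).2.2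
      · rw [hlab u, hlab w] at hl
        by_cases hu : u = v <;> by_cases hw : w = v
        · exact absurd (hu.trans hw.symm) huw
        · rw [hu]; exact huniv w hw
        · rw [hw]; exact (huniv u hu).symm
        · rw [if_pos ((hmem u).mpr hu), if_pos ((hmem w).mpr hw)] at hl
          rcases hl with ⟨_, hc⟩ | ⟨hc, _⟩ <;> exact absurd hc hz
    · intro hadj
      have huw : u ≠ w := hadj.ne
      by_cases hu : u = v
      · have hw : w ≠ v := fun h => huw (hu.trans h.symm)
        refine Or.inr ⟨Or.inr hu, Or.inl ((hmem w).mpr hw), huw, Or.inr ⟨?_, ?_⟩⟩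
        · rw [hlab, if_neg (fun h => (hmem u).mp h hu)]
        · rw [hlab, if_pos ((hmem w).mpr hw)]
      · by_cases hw : w = v
        · refine Or.inr ⟨Or.inl ((hmem u).mpr hu), Or.inr hw, huw, Or.inl ⟨?_, ?_⟩⟩
          · rw [hlab, if_pos ((hmem u).mpr hu)]
          · rw [hlab, if_neg (fun h => (hmem w).mp h hw)]
        · exact Or.inl ((hE u w).mpr ⟨hu, hw, hadj⟩)

/-- if `v` is a universal vertex of `G` and `G` has at least two
vertices, then `cwd(G) = max 2 (cwd(G - v))`. -/
theorem cliqueWidth_universal_vertex {V : Type*} [Fintype V]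
    (G : SimpleGraph V) (v : V) (huniv : ∀ w, w ≠ v → G.Adj v w)
    (h2 : 2 ≤ Fintype.card V) :
    CliqueWidth G = max 2 (CliqueWidth (G.induce ({v}ᶜ : Set V))) := by
  classical
  obtain ⟨w0, hw0⟩ := Fintype.exists_ne_of_one_lt_card (by omega) v
  haveI hne : Nonempty ↥({v}ᶜ : Set V) := ⟨⟨w0, hw0⟩⟩
  have hBup : ∀ ⦃a b : ℕ⦄, a ≤ b →
      (∃ e : CWExpr ↥({v}ᶜ : Set V) a, e.Defines (G.induce ({v}ᶜ : Set V))) →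
      ∃ e : CWExpr ↥({v}ᶜ : Set V) b, e.Defines (G.induce ({v}ᶜ : Set V)) := by
    rintro a b hab ⟨e, he⟩
    exact ⟨CWExpr.castLE hab e, CWExpr.defines_castLE hab he⟩
  have hAB : ∀ k : ℕ, (∃ e : CWExpr V k, e.Defines G) →
      2 ≤ k ∧ ∃ e : CWExpr ↥({v}ᶜ : Set V) k, e.Defines (G.induce ({v}ᶜ : Set V)) := by
    rintro k ⟨e, hwf, hverts, hedges⟩
    have hk2 : 2 ≤ k := by
      by_contra hk
      exact CWExpr.no_edges_of_le_one (by omega) e hwf v w0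
        ((hedges v w0).mpr (huniv w0 hw0))
    refine ⟨hk2, ?_⟩
    obtain ⟨e', he'⟩ := CWExpr.restrict_some (fun x => x ∈ ({v}ᶜ : Set V))
      (Set.mem_compl_singleton_iff.mpr hw0) e (by rw [hverts]; trivial)
    refine ⟨e', CWExpr.wf_restrict _ e hwf e' he', ?_, ?_⟩
    · rw [CWExpr.verts_restrict _ e e' he', hverts, Set.preimage_univ]
    · intro x y
      rw [CWExpr.edges_restrict _ e e' he' x y, hedges]
      simp
  have hBA : ∀ k : ℕ, 2 ≤ k →
      (∃ e : CWExpr ↥({v}ᶜ : Set V) k, e.Defines (G.induce ({v}ᶜ : Set V))) →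
      ∃ e : CWExpr V k, e.Defines G := by
    rintro k hk ⟨e', hwf', hverts', hedges'⟩
    have hinj : Function.Injective (Subtype.val : ↥({v}ᶜ : Set V) → V) :=
      Subtype.coe_injective
    refine ⟨CWExpr.addEdges ⟨0, by omega⟩ ⟨1, by omega⟩
      (CWExpr.union (CWExpr.relabelSeq ⟨0, by omega⟩ (List.finRange k)
        (CWExpr.mapV Subtype.val e')) (CWExpr.single v ⟨1, by omega⟩)),
      defines_add_universal huniv (Fin.ne_of_val_ne (by norm_num)) ?_ ?_ ?_ ?_⟩
    · exact CWExpr.wf_relabelSeq _ _ _ (CWExpr.wf_mapV hinj e' hwf')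
    · rw [CWExpr.verts_relabelSeq, CWExpr.verts_mapV, hverts', Subtype.coe_image_univ]
    · intro u
      rw [CWExpr.label_relabelSeq]
      simp
    · intro u w
      rw [CWExpr.edges_relabelSeq, CWExpr.edges_mapV hinj]
      constructor
      · rintro ⟨a, b, rfl, rfl, hab⟩
        rw [hedges' a b] at hab
        exact ⟨Set.mem_compl_singleton_iff.mp a.2, Set.mem_compl_singleton_iff.mp b.2,
          by simpa using hab⟩
      · rintro ⟨hu, hw, hadj⟩
        exact ⟨⟨u, Set.mem_compl_singleton_iff.mpr hu⟩,
          ⟨w, Set.mem_compl_singleton_iff.mpr hw⟩, rfl, rfl,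
          (hedges' _ _).mpr (by simpa using hadj)⟩
  have hBne : ∃ a : ℕ, ∃ e : CWExpr ↥({v}ᶜ : Set V) a, e.Defines (G.induce ({v}ᶜ : Set V)) :=
    ⟨_, CWExpr.exists_defines _ _⟩
  show sInf {k | ∃ e : CWExpr V k, e.Defines G}
      = max 2 (sInf {k | ∃ e : CWExpr ↥({v}ᶜ : Set V) k, e.Defines (G.induce ({v}ᶜ : Set V))})
  apply le_antisymm
  · exact Nat.sInf_le (hBA _ (le_max_left _ _) (hBup (le_max_right _ _) (Nat.sInf_mem hBne)))
  · have hA := Nat.sInf_mem (s := {k | ∃ e : CWExpr V k, e.Defines G})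
      ⟨_, hBA _ (le_max_left 2 _) (hBup (le_max_right 2 _) (Nat.sInf_mem hBne))⟩
    obtain ⟨hk2, hkB⟩ := hAB _ hA
    exact max_le hk2 (Nat.sInf_le hkB)
end
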